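/- arXiv:2005.06009 — 9 statements merged into one kernel-verified Lean document; each statement's English description precedes it below -/
import Mathlib

section
/- Let v ∈ ℝ^N satisfy v > 0, (A−M)v ≥ 𝟙 and v ≤ γ𝟙 for some γ > 0. Then for every D ≥ 0 and every continuous disturbance d : [0,∞) → ℝ^N with |d_i(t)| ≤ D for all i and all t ≥ 0, the trajectory x(t) = ∫₀ᵗ exp(−(t−s)(A−M)) d(s) ds (the solution of ẋ = −(A−M)x + d with x(0)=0) satisfies |x_i(t)| ≤ γ·D for all i and all t ≥ 0. -/
open Matrix MeasureTheory NormedSpace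

attribute [local instance] Matrix.linftyOpNormedRing Matrix.linftyOpNormedAlgebra

theorem exp_entry_nonneg {N : ℕ} (P : Matrix (Fin N) (Fin N) ℝ) (hP : ∀ i j, 0 ≤ P i j)
    (i j : Fin N) : 0 ≤ exp P i j := by
  have hpow : ∀ n : ℕ, ∀ i j, 0 ≤ (P ^ n) i j := by
    intro n
    induction n with
    | zero => intro i j; simp [Matrix.one_apply]; positivity
    | succ n ih =>
      intro i j
      rw [pow_succ, Matrix.mul_apply]
      exact Finset.sum_nonneg fun k _ => mul_nonneg (ih i k) (hP k j)
  rw [exp_eq_tsum ℝ]; beta_reduce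
  have hs : Summable fun n : ℕ => ((n.factorial : ℝ))⁻¹ • P ^ n := expSeries_summable' (𝕂 := ℝ) P
  have hs1 : Summable fun n : ℕ => (((n.factorial : ℝ))⁻¹ • P ^ n) i := Pi.summable.mp hs i
  erw [tsum_apply hs, tsum_apply hs1]
  refine tsum_nonneg fun n => ?_
  rw [Matrix.smul_apply, smul_eq_mul]
  exact mul_nonneg (by positivity) (hpow n i j)

theorem exp_metzler_nonneg {N : ℕ} (C : Matrix (Fin N) (Fin N) ℝ)
    (hC : ∀ i j, i ≠ j → 0 ≤ C i j) (i j : Fin N) : 0 ≤ exp C i j := by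
  set c : ℝ := ∑ k, |C k k| with hc
  have hcnn : ∀ k, |C k k| ≤ c := fun k =>
    Finset.single_le_sum (f := fun k => |C k k|) (fun _ _ => abs_nonneg _) (Finset.mem_univ k)
  have hP : ∀ i j, 0 ≤ (C + c • (1 : Matrix (Fin N) (Fin N) ℝ)) i j := by
    intro i j
    rcases eq_or_ne i j with rfl | hij
    · simp only [Matrix.add_apply, Matrix.smul_apply, Matrix.one_apply_eq, smul_eq_mul, mul_one]
      linarith [hcnn i, neg_abs_le (C i i)]
    · simp only [Matrix.add_apply, Matrix.smul_apply, Matrix.one_apply_ne hij, smul_eq_mul,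
        mul_zero, add_zero]
      exact hC i j hij
  have key : C = (C + c • 1) + (-c) • (1 : Matrix (Fin N) (Fin N) ℝ) := by
    rw [add_assoc, ← add_smul]; simp
  have hcomm : Commute (C + c • (1 : Matrix (Fin N) (Fin N) ℝ)) ((-c) • 1) := by
    apply Commute.smul_right
    exact Commute.one_right _
  rw [key, Matrix.exp_add_of_commute _ _ hcomm]
  have hdiag : ((-c) • (1 : Matrix (Fin N) (Fin N) ℝ)) = Matrix.diagonal (fun _ => -c) := by
    ext a b
    rcases eq_or_ne a b with rfl | hab
    · simp
    · simp [Matrix.one_apply_ne hab, Matrix.diagonal_apply_ne _ hab]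
  rw [hdiag, Matrix.exp_diagonal, Matrix.mul_apply]
  refine Finset.sum_nonneg fun k _ => ?_
  rcases eq_or_ne k j with rfl | hkj
  · rw [Matrix.diagonal_apply_eq]
    refine mul_nonneg (exp_entry_nonneg _ hP i k) ?_
    rw [Pi.coe_exp, ← Real.exp_eq_exp_ℝ]
    exact (Real.exp_pos _).le
  · rw [Matrix.diagonal_apply_ne _ hkj, mul_zero]

section aux
variable {N : ℕ}

-- coordinate of B *ᵥ : CLM
noncomputable def mulVecCLM (v : Fin N → ℝ) (i : Fin N) :
    Matrix (Fin N) (Fin N) ℝ →L[ℝ] ℝ :=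
  LinearMap.toContinuousLinearMap
    { toFun := fun Y => (Y *ᵥ v) i
      map_add' := by intro Y Z; simp [Matrix.add_mulVec]
      map_smul' := by intro c Y; simp [Matrix.smul_mulVec] }

@[simp] lemma mulVecCLM_apply (v : Fin N → ℝ) (i : Fin N) (Y : Matrix (Fin N) (Fin N) ℝ) :
    mulVecCLM v i Y = (Y *ᵥ v) i := rfl

end aux


/-- If `v > 0` satisfies `(A - M) v ≥ 𝟙` and `v ≤ γ 𝟙`, then the solution
`x(t) = ∫₀ᵗ exp(-(t-s)(A-M)) d(s) ds` of `ẋ = -(A-M)x + d`, `x(0) = 0`, with continuous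
disturbance bounded by `D`, satisfies `|xᵢ(t)| ≤ γ D` for all `i` and `t ≥ 0`. -/
theorem stmt_0 {N : ℕ} (A M : Matrix (Fin N) (Fin N) ℝ)
    (hAdiag : ∀ i j, i ≠ j → A i j = 0) (hApos : ∀ i, 0 < A i i)
    (hMnonneg : ∀ i j, 0 ≤ M i j) (hMdiag : ∀ i, M i i = 0)
    (v : Fin N → ℝ) (hvpos : ∀ i, 0 < v i)
    (hvineq : ∀ i, (1 : ℝ) ≤ ((A - M) *ᵥ v) i)
    (γ : ℝ) (hγ : 0 < γ) (hvγ : ∀ i, v i ≤ γ)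
    (D : ℝ) (hD : 0 ≤ D)
    (d : ℝ → Fin N → ℝ) (hd : ContinuousOn d (Set.Ici 0))
    (hdbound : ∀ i : Fin N, ∀ t ≥ (0 : ℝ), |d t i| ≤ D)
    (x : ℝ → Fin N → ℝ)
    (hx : ∀ t : ℝ, x t = ∫ s in (0 : ℝ)..t, (NormedSpace.exp (-((t - s) • (A - M)))) *ᵥ d s) :
    ∀ i : Fin N, ∀ t ≥ (0 : ℝ), |x t i| ≤ γ * D := by
  intro i t ht
  set B : Matrix (Fin N) (Fin N) ℝ := A - M with hB
  -- entrywise nonnegativity of exp(-(τ•B)) for τ ≥ 0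
  have hE : ∀ τ : ℝ, 0 ≤ τ → ∀ a b : Fin N, 0 ≤ (exp (-(τ • B))) a b := by
    intro τ hτ a b
    refine exp_metzler_nonneg _ (fun a b hab => ?_) a b
    simp only [hB, Matrix.neg_apply, Matrix.smul_apply, Matrix.sub_apply, smul_eq_mul,
      hAdiag a b hab, zero_sub, mul_neg, neg_neg]
    exact mul_nonneg hτ (hMnonneg a b)
  have hEcont : Continuous fun s : ℝ => exp (-((t - s) • B)) := by
    exact exp_continuous.comp (by fun_prop)
  -- integrability of the integrand
  have hIcc : Set.uIcc (0:ℝ) t = Set.Icc 0 t := Set.uIcc_of_le ht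
  have hdco : ContinuousOn d (Set.uIcc (0:ℝ) t) := by
    rw [hIcc]; exact hd.mono (Set.Icc_subset_Ici_self)
  have hfco : ContinuousOn (fun s => (exp (-((t - s) • B))) *ᵥ d s) (Set.uIcc (0:ℝ) t) := by
    refine continuousOn_pi.2 fun a => ?_
    simp only [Matrix.mulVec, dotProduct]
    refine continuousOn_finset_sum _ fun j _ => ContinuousOn.mul ?_ ?_
    · exact (((continuous_apply j).comp ((continuous_apply a).comp hEcont))).continuousOn
    · exact (continuous_apply j).comp_continuousOn hdco
  have hfint : IntervalIntegrable (fun s => (exp (-((t - s) • B))) *ᵥ d s)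
      volume 0 t := hfco.intervalIntegrable
  -- coordinate of the integral
  have hxi : x t i = ∫ s in (0:ℝ)..t, ((exp (-((t - s) • B))) *ᵥ d s) i := by
    rw [hx t]
    have := (ContinuousLinearMap.proj (R := ℝ) (φ := fun _ : Fin N => ℝ) i).intervalIntegral_comp_comm hfint
    exact this.symm
  -- the scalar bound function
  set h : ℝ → ℝ := fun u => ((exp (u • (-B))) *ᵥ (B *ᵥ v)) i with hh
  have hhcont : Continuous h := by
    have : Continuous fun u : ℝ => exp (u • (-B)) := exp_continuous.comp (by fun_prop)
    exact (mulVecCLM (B *ᵥ v) i).continuous.comp this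
  -- FTC
  have hderiv : ∀ u : ℝ, HasDerivAt (fun u => -((mulVecCLM v i) (exp (u • (-B))))) (h u) u := by
    intro u
    have H := hasDerivAt_exp_smul_const (𝕂 := ℝ) (-B) u
    have H2 := ((mulVecCLM v i).hasFDerivAt.comp_hasDerivAt u H).neg
    refine H2.congr_deriv ?_
    show -(((exp (u • -B) * -B) *ᵥ v) i) = _
    simp only [hh, mulVecCLM_apply, ← Matrix.mulVec_mulVec, Matrix.neg_mulVec,
      Matrix.mulVec_neg, neg_neg, Pi.neg_apply]
  have hFTC : ∫ u in (0:ℝ)..t, h u = v i - ((exp (t • (-B))) *ᵥ v) i := by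
    rw [intervalIntegral.integral_eq_sub_of_hasDerivAt (fun u _ => hderiv u)
      (hhcont.intervalIntegrable 0 t)]
    simp only [mulVecCLM_apply, zero_smul, NormedSpace.exp_zero, Matrix.one_mulVec]
    ring
  have hIle : ∫ u in (0:ℝ)..t, h u ≤ γ := by
    rw [hFTC]
    have h0 : 0 ≤ ((exp (t • (-B))) *ᵥ v) i := by
      rw [smul_neg, Matrix.mulVec, dotProduct]
      exact Finset.sum_nonneg fun j _ => mul_nonneg (hE t ht i j) (hvpos j).le
    linarith [hvγ i]
  -- pointwise bound
  have hpt : ∀ s ∈ Set.Icc (0:ℝ) t, |((exp (-((t - s) • B))) *ᵥ d s) i| ≤ h (t - s) * D := by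
    intro s hs
    have hts : (0:ℝ) ≤ t - s := by linarith [hs.2]
    have hEn := hE (t - s) hts
    have step1 : |((exp (-((t - s) • B))) *ᵥ d s) i|
        ≤ ∑ j, (exp (-((t - s) • B))) i j * ((B *ᵥ v) j * D) := by
      rw [Matrix.mulVec, dotProduct]
      refine (Finset.abs_sum_le_sum_abs _ _).trans (Finset.sum_le_sum fun j _ => ?_)
      rw [abs_mul, abs_of_nonneg (hEn i j)]
      refine mul_le_mul_of_nonneg_left ?_ (hEn i j)
      exact (hdbound j s hs.1).trans (le_mul_of_one_le_left hD (hvineq j))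
    refine step1.trans (le_of_eq ?_)
    rw [hh]
    simp only [smul_neg]
    rw [Matrix.mulVec, dotProduct, Finset.sum_mul]
    exact Finset.sum_congr rfl fun j _ => by ring
  -- putting it together
  have hgco : ContinuousOn (fun s => ((exp (-((t - s) • B))) *ᵥ d s) i) (Set.uIcc (0:ℝ) t) :=
    (continuous_apply i).comp_continuousOn hfco
  have hint1 : IntervalIntegrable (fun s => |((exp (-((t - s) • B))) *ᵥ d s) i|)
      volume 0 t := hgco.abs.intervalIntegrable
  have hint2 : IntervalIntegrable (fun s => h (t - s) * D) volume 0 t :=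
    ((hhcont.comp (by fun_prop)).mul continuous_const).intervalIntegrable _ _
  rw [hxi]
  calc |∫ s in (0:ℝ)..t, ((exp (-((t - s) • B))) *ᵥ d s) i|
      ≤ ∫ s in (0:ℝ)..t, |((exp (-((t - s) • B))) *ᵥ d s) i| :=
        intervalIntegral.abs_integral_le_integral_abs ht
    _ ≤ ∫ s in (0:ℝ)..t, h (t - s) * D :=
        intervalIntegral.integral_mono_on ht hint1 hint2 hpt
    _ = (∫ s in (0:ℝ)..t, h (t - s)) * D := intervalIntegral.integral_mul_const D _
    _ = (∫ u in (0:ℝ)..t, h u) * D := by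
        rw [intervalIntegral.integral_comp_sub_left h t]
        simp
    _ ≤ γ * D := mul_le_mul_of_nonneg_right hIle hD
end

section
/- Suppose −(A−M) is Hurwitz, and suppose that the trajectory x(t) = ∫₀ᵗ exp(−(t−s)(A−M)) 𝟙 ds (the solution of ẋ = −(A−M)x + d with x(0)=0 and constant disturbance d ≡ 𝟙) satisfies |x_i(t)| ≤ γ for all i and all t ≥ 0. Then the vector v = (A−M)^{−1}𝟙 satisfies (A−M)v = 𝟙, v > 0, and v ≤ γ𝟙. -/
open Matrix MeasureTheory

/-- A real square matrix is Hurwitz if every eigenvalue (over `ℂ`) has negative real part. -/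
def IsHurwitz {n : Type*} [Fintype n] [DecidableEq n] (B : Matrix n n ℝ) : Prop :=
  ∀ μ ∈ spectrum ℂ (B.map Complex.ofReal), μ.re < 0

open NormedSpace
theorem pow_entry_nonneg {n : ℕ} {X : Matrix (Fin n) (Fin n) ℝ} (hX : ∀ i j, 0 ≤ X i j) :
    ∀ k : ℕ, ∀ i j, 0 ≤ (X ^ k) i j := by
  intro k
  induction k with
  | zero => intro i j; by_cases h : i = j <;> simp [pow_zero, Matrix.one_apply, h]
  | succ k ih =>
    intro i j
    rw [pow_succ, Matrix.mul_apply]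
    exact Finset.sum_nonneg fun l _ => mul_nonneg (ih i l) (hX l j)

theorem matexp_entry_summable {n : ℕ} (X : Matrix (Fin n) (Fin n) ℝ) (i j : Fin n) :
    Summable (fun k : ℕ => ((k.factorial⁻¹ : ℝ) • X ^ k) i j) ∧
      exp X i j = ∑' k : ℕ, ((k.factorial⁻¹ : ℝ) • X ^ k) i j := by
  letI : SeminormedRing (Matrix (Fin n) (Fin n) ℝ) := Matrix.linftyOpSemiNormedRing
  letI : NormedRing (Matrix (Fin n) (Fin n) ℝ) := Matrix.linftyOpNormedRing
  letI : NormedAlgebra ℝ (Matrix (Fin n) (Fin n) ℝ) := Matrix.linftyOpNormedAlgebra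
  have hsum : Summable (fun k : ℕ => (k.factorial⁻¹ : ℝ) • X ^ k) := expSeries_summable' X
  have h1 : Summable (fun k : ℕ => ((k.factorial⁻¹ : ℝ) • X ^ k) i) := by
    exact (Pi.summable).1 hsum i
  have h2 : Summable (fun k : ℕ => ((k.factorial⁻¹ : ℝ) • X ^ k) i j) := (Pi.summable).1 h1 j
  refine ⟨h2, ?_⟩
  have hXe : exp X = ∑' k : ℕ, (k.factorial⁻¹ : ℝ) • X ^ k := congrFun (exp_eq_tsum ℝ) X
  rw [hXe]; exact (congrFun (tsum_apply hsum) j).trans (tsum_apply h1)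

theorem matexp_entry_nonneg {n : ℕ} {X : Matrix (Fin n) (Fin n) ℝ} (hX : ∀ i j, 0 ≤ X i j)
    (i j : Fin n) : 0 ≤ exp X i j := by
  obtain ⟨h2, he⟩ := matexp_entry_summable X i j
  rw [he]
  refine tsum_nonneg fun k => ?_
  have := pow_entry_nonneg hX k i j
  simpa using mul_nonneg (by positivity : (0:ℝ) ≤ (k.factorial : ℝ)⁻¹) this

theorem matexp_diag_ge_one {n : ℕ} {X : Matrix (Fin n) (Fin n) ℝ} (hX : ∀ i j, 0 ≤ X i j)
    (i : Fin n) : 1 ≤ exp X i i := by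
  obtain ⟨h2, he⟩ := matexp_entry_summable X i i
  rw [he]
  have h0 : ((Nat.factorial 0 : ℝ)⁻¹ • X ^ 0) i i = 1 := by
    simp [Matrix.one_apply]
  calc (1:ℝ) = ((Nat.factorial 0 : ℝ)⁻¹ • X ^ 0) i i := h0.symm
    _ ≤ ∑' k : ℕ, ((k.factorial⁻¹ : ℝ) • X ^ k) i i := by
        refine Summable.le_tsum h2 0 fun k _ => ?_
        have := pow_entry_nonneg hX k i i
        simpa using mul_nonneg (by positivity : (0:ℝ) ≤ (k.factorial : ℝ)⁻¹) this

theorem matexp_smul_bounds {n : ℕ} (X : Matrix (Fin n) (Fin n) ℝ) (c : ℝ)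
    (hoff : ∀ i j, i ≠ j → 0 ≤ X i j) (hdiag : ∀ i, 0 ≤ X i i + c) {s : ℝ} (hs : 0 ≤ s) :
    (∀ i j, 0 ≤ exp (s • X) i j) ∧ ∀ i, Real.exp (-(s*c)) ≤ exp (s • X) i i := by
  set Y : Matrix (Fin n) (Fin n) ℝ := s • X + (s*c) • 1 with hY
  have hYnn : ∀ i j, 0 ≤ Y i j := by
    intro i j
    by_cases h : i = j
    · subst h
      have : Y i i = s * (X i i + c) := by
        simp [hY, Matrix.one_apply]
        ring
      rw [this]
      exact mul_nonneg hs (hdiag i)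
    · have : Y i j = s * X i j := by simp [hY, Matrix.one_apply, h]
      rw [this]
      exact mul_nonneg hs (hoff i j h)
  have hsplit : s • X = (-(s*c)) • (1 : Matrix (Fin n) (Fin n) ℝ) + Y := by
    rw [hY]; module
  have hcomm : Commute ((-(s*c)) • (1 : Matrix (Fin n) (Fin n) ℝ)) Y :=
    Commute.smul_left (Commute.one_left Y) _
  have h1 : exp ((-(s*c)) • (1 : Matrix (Fin n) (Fin n) ℝ))
      = Real.exp (-(s*c)) • (1 : Matrix (Fin n) (Fin n) ℝ) := by
    rw [Matrix.smul_one_eq_diagonal, Matrix.exp_diagonal, Matrix.smul_one_eq_diagonal]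
    rw [Pi.exp_def]
    funext i
    rw [Real.exp_eq_exp_ℝ]
  have hexp : exp (s • X) = Real.exp (-(s*c)) • exp Y := by
    rw [hsplit, Matrix.exp_add_of_commute _ _ hcomm, h1, Matrix.smul_mul, Matrix.one_mul]
  constructor
  · intro i j
    rw [hexp]
    have : (Real.exp (-(s*c)) • exp Y) i j = Real.exp (-(s*c)) * exp Y i j := rfl
    rw [this]
    exact mul_nonneg (Real.exp_nonneg _) (matexp_entry_nonneg hYnn i j)
  · intro i
    rw [hexp]
    have : (Real.exp (-(s*c)) • exp Y) i i = Real.exp (-(s*c)) * exp Y i i := rfl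
    rw [this]
    nth_rewrite 1 [← mul_one (Real.exp (-(s*c)))]
    exact mul_le_mul_of_nonneg_left (matexp_diag_ge_one hYnn i) (Real.exp_nonneg _)

theorem matexp_mulVec_hasDerivAt {n : ℕ} (X : Matrix (Fin n) (Fin n) ℝ) (w : Fin n → ℝ) (s : ℝ) :
    HasDerivAt (fun u : ℝ => exp (u • X) *ᵥ w) ((exp (s • X) * X) *ᵥ w) s := by
  letI : SeminormedRing (Matrix (Fin n) (Fin n) ℝ) := Matrix.linftyOpSemiNormedRing
  letI : NormedRing (Matrix (Fin n) (Fin n) ℝ) := Matrix.linftyOpNormedRing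
  letI : NormedAlgebra ℝ (Matrix (Fin n) (Fin n) ℝ) := Matrix.linftyOpNormedAlgebra
  have hD : HasDerivAt (fun u : ℝ => exp (u • X)) (exp (s • X) * X) s :=
    hasDerivAt_exp_smul_const X s
  let φL : Matrix (Fin n) (Fin n) ℝ →ₗ[ℝ] (Fin n → ℝ) :=
    { toFun := fun E => E *ᵥ w
      map_add' := fun E F => Matrix.add_mulVec E F w
      map_smul' := fun r E => Matrix.smul_mulVec r E w }
  let φ := LinearMap.toContinuousLinearMap φL
  exact φ.hasFDerivAt.comp_hasDerivAt s hD

theorem matexp_mulVec_continuous {n : ℕ} (X : Matrix (Fin n) (Fin n) ℝ) (w : Fin n → ℝ) :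
    Continuous fun s : ℝ => exp (s • X) *ᵥ w :=
  continuous_iff_continuousAt.2 fun s => (matexp_mulVec_hasDerivAt X w s).continuousAt

theorem key_identity {n : ℕ} (X : Matrix (Fin n) (Fin n) ℝ) (w : Fin n → ℝ) (t : ℝ) :
    (-X) *ᵥ (∫ s in (0:ℝ)..t, exp (s • X) *ᵥ w) = w - exp (t • X) *ᵥ w := by
  have hint : IntervalIntegrable (fun s : ℝ => exp (s • X) *ᵥ w) volume 0 t :=
    (matexp_mulVec_continuous X w).intervalIntegrable 0 t
  let ψL : (Fin n → ℝ) →ₗ[ℝ] (Fin n → ℝ) := Matrix.mulVecLin (-X)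
  let ψ := LinearMap.toContinuousLinearMap ψL
  have hψ : ∀ v, ψ v = (-X) *ᵥ v := fun v => rfl
  have hcomm : ∀ s : ℝ, X * exp (s • X) = exp (s • X) * X := by
    intro s
    letI : SeminormedRing (Matrix (Fin n) (Fin n) ℝ) := Matrix.linftyOpSemiNormedRing
    letI : NormedRing (Matrix (Fin n) (Fin n) ℝ) := Matrix.linftyOpNormedRing
    letI : NormedAlgebra ℝ (Matrix (Fin n) (Fin n) ℝ) := Matrix.linftyOpNormedAlgebra
    exact (((Commute.refl X).smul_right s).exp_right)
  have hstep : ∀ s : ℝ, (-X) *ᵥ (exp (s • X) *ᵥ w) = -((exp (s • X) * X) *ᵥ w) := by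
    intro s
    rw [Matrix.mulVec_mulVec, Matrix.neg_mul, hcomm s, ← Matrix.neg_mulVec]
  have hftc : (∫ s in (0:ℝ)..t, (exp (s • X) * X) *ᵥ w) = exp (t • X) *ᵥ w - w := by
    have hderiv : ∀ s ∈ Set.uIcc (0:ℝ) t,
        HasDerivAt (fun u : ℝ => exp (u • X) *ᵥ w) ((exp (s • X) * X) *ᵥ w) s :=
      fun s _ => matexp_mulVec_hasDerivAt X w s
    have hint2 : IntervalIntegrable (fun s : ℝ => (exp (s • X) * X) *ᵥ w) volume 0 t := by
      have : (fun s : ℝ => (exp (s • X) * X) *ᵥ w)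
          = fun s : ℝ => exp (s • X) *ᵥ (X *ᵥ w) := by
        funext s; rw [Matrix.mulVec_mulVec]
      rw [this]
      exact (matexp_mulVec_continuous X (X *ᵥ w)).intervalIntegrable 0 t
    have := intervalIntegral.integral_eq_sub_of_hasDerivAt hderiv hint2
    rw [this, zero_smul, exp_zero, Matrix.one_mulVec]
  calc (-X) *ᵥ (∫ s in (0:ℝ)..t, exp (s • X) *ᵥ w)
      = ψ (∫ s in (0:ℝ)..t, exp (s • X) *ᵥ w) := (hψ _).symm
    _ = ∫ s in (0:ℝ)..t, ψ (exp (s • X) *ᵥ w) := (ψ.intervalIntegral_comp_comm hint).symm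
    _ = ∫ s in (0:ℝ)..t, -((exp (s • X) * X) *ᵥ w) := by
        congr 1; funext s; rw [hψ, hstep s]
    _ = -(∫ s in (0:ℝ)..t, (exp (s • X) * X) *ᵥ w) := intervalIntegral.integral_neg
    _ = w - exp (t • X) *ᵥ w := by rw [hftc]; abel

/-- If `-(A-M)` is Hurwitz and the zero-initial-condition trajectory for the
constant disturbance `d ≡ 𝟙` satisfies `|xᵢ(t)| ≤ γ` for all `i, t ≥ 0`, then
`v = (A-M)⁻¹ 𝟙` satisfies `(A-M) v = 𝟙`, `v > 0` and `v ≤ γ 𝟙`. -/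
theorem stmt_1 {N : ℕ} (A M : Matrix (Fin N) (Fin N) ℝ)
    (hAdiag : ∀ i j, i ≠ j → A i j = 0) (hApos : ∀ i, 0 < A i i)
    (hMnonneg : ∀ i j, 0 ≤ M i j) (hMdiag : ∀ i, M i i = 0)
    (hHur : IsHurwitz (-(A - M)))
    (γ : ℝ)
    (x : ℝ → Fin N → ℝ)
    (hx : ∀ t : ℝ,
      x t = ∫ s in (0 : ℝ)..t,
        (NormedSpace.exp (-((t - s) • (A - M)))) *ᵥ (fun _ : Fin N => (1 : ℝ)))
    (hxbound : ∀ i : Fin N, ∀ t ≥ (0 : ℝ), |x t i| ≤ γ) :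
    ((A - M) *ᵥ ((A - M)⁻¹ *ᵥ (fun _ : Fin N => (1 : ℝ))) = fun _ : Fin N => (1 : ℝ)) ∧
    (∀ i, 0 < ((A - M)⁻¹ *ᵥ (fun _ : Fin N => (1 : ℝ))) i) ∧
    (∀ i, ((A - M)⁻¹ *ᵥ (fun _ : Fin N => (1 : ℝ))) i ≤ γ) := by
  classical
  set one : Fin N → ℝ := fun _ => (1:ℝ) with hone
  set X : Matrix (Fin N) (Fin N) ℝ := M - A with hXdef
  have hXneg : -X = A - M := by rw [hXdef, neg_sub]
  set c : ℝ := ∑ i, A i i with hc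
  have hcge : ∀ i, A i i ≤ c :=
    fun i => Finset.single_le_sum (fun j _ => (hApos j).le) (Finset.mem_univ i)
  have hc0 : 0 ≤ c := Finset.sum_nonneg fun j _ => (hApos j).le
  have hoff : ∀ i j, i ≠ j → 0 ≤ X i j := by
    intro i j hij
    have : X i j = M i j := by simp [hXdef, hAdiag i j hij]
    rw [this]; exact hMnonneg i j
  have hdiagc : ∀ i, 0 ≤ X i i + c := by
    intro i
    have : X i i = -A i i := by simp [hXdef, hMdiag i]
    rw [this]; linarith [hcge i]
  set g : ℝ → Fin N → ℝ := fun s => exp (s • X) *ᵥ one with hg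
  have hgc : Continuous g := matexp_mulVec_continuous X one
  have hgci : ∀ i, Continuous fun s => g s i := fun i => (continuous_apply i).comp hgc
  have hgsum : ∀ s i, g s i = ∑ j, exp (s • X) i j := by
    intro s i
    simp [hg, Matrix.mulVec, dotProduct, hone]
  have hgnn : ∀ s, 0 ≤ s → ∀ i, 0 ≤ g s i := by
    intro s hs i
    rw [hgsum]
    exact Finset.sum_nonneg fun j _ => (matexp_smul_bounds X c hoff hdiagc hs).1 i j
  have hglb : ∀ s, 0 ≤ s → ∀ i, Real.exp (-(s*c)) ≤ g s i := by
    intro s hs i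
    rw [hgsum]
    calc Real.exp (-(s*c)) ≤ exp (s • X) i i := (matexp_smul_bounds X c hoff hdiagc hs).2 i
      _ ≤ ∑ j, exp (s • X) i j :=
        Finset.single_le_sum (fun j _ => (matexp_smul_bounds X c hoff hdiagc hs).1 i j)
          (Finset.mem_univ i)
  -- x as integral of g
  have hxg : ∀ t, x t = ∫ s in (0:ℝ)..t, g s := by
    intro t
    rw [hx t]
    have h1 : (fun s : ℝ => exp (-((t - s) • (A - M))) *ᵥ one) = fun s => g (t - s) := by
      funext s
      have : -((t - s) • (A - M)) = (t - s) • X := by rw [← hXneg, smul_neg, neg_neg]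
      rw [hg, this]
    rw [h1, intervalIntegral.integral_comp_sub_left g t, sub_self, sub_zero]
  -- componentwise integral
  have hcompint : ∀ (a b : ℝ) (i : Fin N), (∫ s in a..b, g s) i = ∫ s in a..b, g s i := by
    intro a b i
    exact ((ContinuousLinearMap.proj (R := ℝ) (φ := fun _ : Fin N => ℝ) i).intervalIntegral_comp_comm
      (hgc.intervalIntegrable a b)).symm
  -- difference formula
  have hdiff : ∀ (a b : ℝ) (i : Fin N), x b i - x a i = ∫ s in a..b, g s i := by
    intro a b i
    have hadd := intervalIntegral.integral_add_adjacent_intervals (μ := volume)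
      ((hgci i).intervalIntegrable 0 a) ((hgci i).intervalIntegrable a b)
    have hxa : x a i = ∫ s in (0:ℝ)..a, g s i := by rw [hxg a]; exact hcompint 0 a i
    have hxb : x b i = ∫ s in (0:ℝ)..b, g s i := by rw [hxg b]; exact hcompint 0 b i
    rw [hxa, hxb, ← hadd]; ring
  -- monotone on nonneg reals
  have hmono : ∀ (a b : ℝ), 0 ≤ a → a ≤ b → ∀ i, x a i ≤ x b i := by
    intro a b ha hab i
    have h0 : 0 ≤ ∫ s in a..b, g s i :=
      intervalIntegral.integral_nonneg hab fun u hu => hgnn u (le_trans ha hu.1) i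
    have := hdiff a b i
    linarith
  -- limit
  set L : Fin N → ℝ := fun i => ⨆ t : ℝ, x (max t 0) i with hL
  have hbdd : ∀ i, BddAbove (Set.range fun t : ℝ => x (max t 0) i) := by
    intro i
    refine ⟨γ, ?_⟩
    rintro _ ⟨t, rfl⟩
    exact (abs_le.1 (hxbound i _ (le_max_right t 0))).2
  have hmono' : ∀ i, Monotone fun t : ℝ => x (max t 0) i := by
    intro i a b hab
    exact hmono (max a 0) (max b 0) (le_max_right _ _) (max_le_max hab le_rfl) i
  have htend : ∀ i, Filter.Tendsto (fun t => x t i) Filter.atTop (nhds (L i)) := by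
    intro i
    have h1 : Filter.Tendsto (fun t : ℝ => x (max t 0) i) Filter.atTop (nhds (L i)) :=
      tendsto_atTop_ciSup (hmono' i) (hbdd i)
    refine h1.congr' ?_
    filter_upwards [Filter.eventually_ge_atTop (0:ℝ)] with t ht
    rw [max_eq_left ht]
  have hLle : ∀ i, L i ≤ γ := by
    intro i
    refine le_of_tendsto (htend i) ?_
    filter_upwards [Filter.eventually_ge_atTop (0:ℝ)] with t ht
    exact (abs_le.1 (hxbound i t ht)).2
  have hx1pos : ∀ i, 0 < x 1 i := by
    intro i
    have h1 : x 1 i = ∫ s in (0:ℝ)..1, g s i := by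
      have := hdiff 0 1 i
      have hx0 : x 0 i = 0 := by
        rw [hxg 0, intervalIntegral.integral_same]
        rfl
      linarith
    have h2 : (∫ s in (0:ℝ)..1, Real.exp (-c)) ≤ ∫ s in (0:ℝ)..1, g s i := by
      refine intervalIntegral.integral_mono_on zero_le_one (intervalIntegrable_const)
        ((hgci i).intervalIntegrable 0 1) ?_
      intro s hs
      calc Real.exp (-c) ≤ Real.exp (-(s*c)) := by
            apply Real.exp_le_exp.2
            have : s * c ≤ c := mul_le_of_le_one_left hc0 hs.2
            linarith
        _ ≤ g s i := hglb s hs.1 i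
    have h3 : (∫ _ in (0:ℝ)..1, Real.exp (-c)) = Real.exp (-c) := by simp
    rw [h1]
    calc (0:ℝ) < Real.exp (-c) := Real.exp_pos _
      _ = ∫ _ in (0:ℝ)..1, Real.exp (-c) := h3.symm
      _ ≤ ∫ s in (0:ℝ)..1, g s i := h2
  have hxle : ∀ i, x 1 i ≤ L i := by
    intro i
    have := le_ciSup (hbdd i) (1:ℝ)
    rwa [max_eq_left zero_le_one] at this
  -- key identity
  have hkey : ∀ t, (A - M) *ᵥ x t = one - g t := by
    intro t
    rw [hxg t, ← hXneg, hg]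
    exact key_identity X one t
  -- convergence of g components
  have hgtend : ∀ i, Filter.Tendsto (fun t => g t i) Filter.atTop
      (nhds (1 - ((A - M) *ᵥ L) i)) := by
    intro i
    have h1 : ∀ t, g t i = 1 - ((A - M) *ᵥ x t) i := by
      intro t
      have := congrFun (hkey t) i
      have hone1 : one i = 1 := rfl
      simp only [Pi.sub_apply, hone1] at this
      linarith
    have h2 : Filter.Tendsto (fun t => ((A - M) *ᵥ x t) i) Filter.atTop
        (nhds (((A - M) *ᵥ L) i)) := by
      have hmv : ∀ t, ((A - M) *ᵥ x t) i = ∑ j, (A - M) i j * x t j := by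
        intro t; simp [Matrix.mulVec, dotProduct]
      have hmvL : ((A - M) *ᵥ L) i = ∑ j, (A - M) i j * L j := by
        simp [Matrix.mulVec, dotProduct]
      simp only [hmv, hmvL]
      exact tendsto_finset_sum _ fun j _ => (htend j).const_mul _
    simp only [h1]
    exact (tendsto_const_nhds.sub h2)
  -- the limit satisfies (A-M) L = one
  have hBL : (A - M) *ᵥ L = one := by
    funext i
    have hd1 : 0 ≤ 1 - ((A - M) *ᵥ L) i := by
      refine ge_of_tendsto (hgtend i) ?_
      filter_upwards [Filter.eventually_ge_atTop (0:ℝ)] with t ht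
      exact hgnn t ht i
    have hd2 : 1 - ((A - M) *ᵥ L) i ≤ 0 := by
      by_contra hpos
      push_neg at hpos
      set d := 1 - ((A - M) *ᵥ L) i with hdd
      have hhalf : ∀ᶠ t in Filter.atTop, d / 2 ≤ g t i :=
        (hgtend i).eventually (eventually_ge_nhds (by linarith))
      obtain ⟨T, hT⟩ := Filter.eventually_atTop.1 hhalf
      set T' := max T 0 with hT'
      have hγ0 : 0 ≤ γ := le_trans (abs_nonneg _) (hxbound i 0 le_rfl)
      set b := T' + (2*γ + 1) / (d / 2) with hb
      have hT'b : T' ≤ b := by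
        rw [hb]
        have : 0 ≤ (2*γ + 1) / (d / 2) := by positivity
        linarith
      have hlow : ∀ s ∈ Set.Icc T' b, d / 2 ≤ g s i := fun s hs =>
        hT s (le_trans (le_max_left T 0) hs.1)
      have hi1 : (∫ s in T'..b, (d/2 : ℝ)) ≤ ∫ s in T'..b, g s i :=
        intervalIntegral.integral_mono_on hT'b intervalIntegrable_const
          ((hgci i).intervalIntegrable T' b) hlow
      have hi2 : (∫ _ in T'..b, (d/2 : ℝ)) = (b - T') * (d/2) := by
        rw [intervalIntegral.integral_const, smul_eq_mul]
      have hbT : b - T' = (2*γ + 1) / (d / 2) := by rw [hb]; ring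
      have hval : (b - T') * (d/2) = 2*γ + 1 := by
        have hne : d/2 ≠ 0 := by positivity
        rw [hbT, div_mul_cancel₀ _ hne]
      have hxb := hdiff T' b i
      have hub : x b i ≤ γ := (abs_le.1 (hxbound i b (le_trans (le_max_right T 0) hT'b))).2
      have hlb : -γ ≤ x T' i := (abs_le.1 (hxbound i T' (le_max_right T 0))).1
      have : 2*γ + 1 ≤ x b i - x T' i := by
        rw [hxb]
        calc 2*γ + 1 = (b - T') * (d/2) := hval.symm
          _ = ∫ _ in T'..b, (d/2 : ℝ) := hi2.symm
          _ ≤ ∫ s in T'..b, g s i := hi1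
      linarith
    have : ((A - M) *ᵥ L) i = 1 := by linarith
    rw [this]
  -- invertibility
  have hinv : IsUnit (A - M).det := by
    by_contra h
    have hdet0 : (A - M).det = 0 := by rwa [isUnit_iff_ne_zero, not_ne_iff] at h
    have hdetn : (-(A - M)).det = 0 := by rw [Matrix.det_neg, hdet0, mul_zero]
    have hdetC : ((-(A - M)).map Complex.ofReal).det = 0 := by
      have := RingHom.map_det Complex.ofRealHom (-(A - M))
      rw [hdetn] at this
      rw [map_zero] at this; exact this.symm
    have hnu : ¬ IsUnit ((-(A - M)).map Complex.ofReal) := by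
      rw [Matrix.isUnit_iff_isUnit_det, hdetC]
      simp
    have h0 : (0:ℂ) ∈ spectrum ℂ ((-(A - M)).map Complex.ofReal) :=
      (spectrum.zero_mem_iff ℂ).2 hnu
    have := hHur 0 h0
    simp at this
  -- conclude
  have hv : (A - M)⁻¹ *ᵥ one = L := by
    rw [← hBL, Matrix.mulVec_mulVec, Matrix.nonsing_inv_mul _ hinv, Matrix.one_mulVec]
  refine ⟨?_, ?_, ?_⟩
  · rw [hv, hBL]
  · intro i
    rw [hv]
    exact lt_of_lt_of_le (hx1pos i) (hxle i)
  · intro i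
    rw [hv]
    exact hLle i
end

section
/- Suppose −(A−M) is Hurwitz. Then A−M is invertible, every entry of (A−M)^{−1} is nonnegative, and the vector u = (A−M)^{−1}𝟙 has all entries strictly positive. -/
open Matrix

attribute [local instance] Matrix.linftyOpSeminormedAddCommGroup
  Matrix.linftyOpNormedAddCommGroup Matrix.linftyOpNonUnitalSemiNormedRing
  Matrix.linftyOpSemiNormedRing Matrix.linftyOpNonUnitalNormedRing
  Matrix.linftyOpNormedRing Matrix.linftyOpNormedSpace Matrix.linftyOpNormedAlgebra

namespace Stmt3Aux

variable {N : ℕ}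

abbrev Mat (N : ℕ) := Matrix (Fin N) (Fin N) ℝ

/-- entry evaluation as a linear map -/
def entryLM (i j : Fin N) : Mat N →ₗ[ℝ] ℝ where
  toFun X := X i j
  map_add' _ _ := rfl
  map_smul' _ _ := rfl

lemma entry_mul_nonneg {P Q : Mat N} (hP : ∀ i j, 0 ≤ P i j) (hQ : ∀ i j, 0 ≤ Q i j) :
    ∀ i j, 0 ≤ (P * Q) i j := by
  intro i j
  rw [Matrix.mul_apply]
  exact Finset.sum_nonneg fun k _ => mul_nonneg (hP i k) (hQ k j)

lemma entry_pow_nonneg {Q : Mat N} (hQ : ∀ i j, 0 ≤ Q i j) :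
    ∀ n : ℕ, ∀ i j, 0 ≤ (Q ^ n) i j := by
  intro n
  induction n with
  | zero => intro i j; rw [pow_zero]; by_cases h : i = j <;> simp [Matrix.one_apply, h]
  | succ n ih =>
    rw [pow_succ]
    exact entry_mul_nonneg ih hQ

lemma entry_tsum_geom_nonneg {Q : Mat N} (hQn : ‖Q‖ < 1) (hQ : ∀ i j, 0 ≤ Q i j) :
    ∀ i j, 0 ≤ (∑' n : ℕ, Q ^ n) i j := by
  have hs : Summable (fun n : ℕ => Q ^ n) := summable_geometric_of_norm_lt_one hQn
  intro i j
  have hmap : (∑' n : ℕ, Q ^ n) i j = ∑' n : ℕ, (Q ^ n) i j := by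
    have := ((entryLM (N := N) i j).toContinuousLinearMap).map_tsum hs
    exact this
  rw [hmap]
  exact tsum_nonneg fun n => entry_pow_nonneg hQ n i j

/-- Neumann series base case: `r • 1 - P` with `P ≥ 0` and `‖P‖ < r`. -/
lemma base {B P : Mat N} {r : ℝ} (hBP : B = r • (1 : Mat N) - P)
    (hP : ∀ i j, 0 ≤ P i j) (hr : ‖P‖ < r) :
    IsUnit B ∧ ∀ i j, 0 ≤ B⁻¹ i j := by
  have hr0 : 0 < r := lt_of_le_of_lt (norm_nonneg P) hr
  set Q : Mat N := r⁻¹ • P with hQdef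
  have hQn : ‖Q‖ < 1 := by
    rw [hQdef, norm_smul, Real.norm_of_nonneg (inv_nonneg.mpr hr0.le)]
    have := (div_lt_one hr0).mpr hr
    rwa [div_eq_inv_mul] at this
  have hQnn : ∀ i j, 0 ≤ Q i j := by
    intro i j
    have : Q i j = r⁻¹ * P i j := rfl
    rw [this]
    exact mul_nonneg (inv_nonneg.mpr hr0.le) (hP i j)
  have key : B = r • ((1 : Mat N) - Q) := by
    rw [hBP, smul_sub, hQdef, smul_smul, mul_inv_cancel₀ hr0.ne', one_smul]
  set S : Mat N := ∑' n : ℕ, Q ^ n with hSdef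
  have hSQ : S * ((1 : Mat N) - Q) = 1 := geom_series_mul_neg Q hQn
  have hV : (r⁻¹ • S) * B = 1 := by
    rw [key, Matrix.smul_mul, Matrix.mul_smul, smul_smul, inv_mul_cancel₀ hr0.ne', one_smul, hSQ]
  refine ⟨(Matrix.isUnit_iff_isUnit_det _).mpr (Matrix.isUnit_det_of_left_inverse hV), ?_⟩
  rw [Matrix.inv_eq_left_inv hV]
  intro i j
  have : (r⁻¹ • S) i j = r⁻¹ * S i j := rfl
  rw [this]
  exact mul_nonneg (inv_nonneg.mpr hr0.le) (entry_tsum_geom_nonneg hQn hQnn i j)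

/-- Descent step: nonnegativity of the resolvent propagates downward. -/
lemma step {B : Mat N} {t t' : ℝ} (hU : IsUnit (B + t' • (1 : Mat N)))
    (hg : ∀ i j, 0 ≤ (B + t' • (1 : Mat N))⁻¹ i j) (htt : t ≤ t')
    (hsmall : (t' - t) * ‖(B + t' • (1 : Mat N))⁻¹‖ < 1) :
    IsUnit (B + t • (1 : Mat N)) ∧ ∀ i j, 0 ≤ (B + t • (1 : Mat N))⁻¹ i j := by
  set g : Mat N := (B + t' • (1 : Mat N))⁻¹ with hgdef
  set Q : Mat N := (t' - t) • g with hQdef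
  have hQn : ‖Q‖ < 1 := by
    rw [hQdef, norm_smul, Real.norm_of_nonneg (by linarith)]
    exact hsmall
  have hQnn : ∀ i j, 0 ≤ Q i j := by
    intro i j
    have : Q i j = (t' - t) * g i j := rfl
    rw [this]
    exact mul_nonneg (by linarith) (hg i j)
  have hdet : IsUnit (B + t' • (1 : Mat N)).det := (Matrix.isUnit_iff_isUnit_det _).mp hU
  have hgl : g * (B + t' • (1 : Mat N)) = 1 := Matrix.nonsing_inv_mul _ hdet
  have hgr : (B + t' • (1 : Mat N)) * g = 1 := Matrix.mul_nonsing_inv _ hdet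
  have key : B + t • (1 : Mat N) = (B + t' • (1 : Mat N)) * ((1 : Mat N) - Q) := by
    rw [mul_sub, mul_one, hQdef, Matrix.mul_smul, hgr]
    module
  set S : Mat N := ∑' n : ℕ, Q ^ n with hSdef
  have hSQ : S * ((1 : Mat N) - Q) = 1 := geom_series_mul_neg Q hQn
  have hV : (S * g) * (B + t • (1 : Mat N)) = 1 := by
    rw [key, Matrix.mul_assoc S, ← Matrix.mul_assoc g, hgl, Matrix.one_mul, hSQ]
  refine ⟨(Matrix.isUnit_iff_isUnit_det _).mpr (Matrix.isUnit_det_of_left_inverse hV), ?_⟩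
  rw [Matrix.inv_eq_left_inv hV]
  exact entry_mul_nonneg (entry_tsum_geom_nonneg hQn hQnn) hg

/-- Invertibility of `B + t • 1` from the spectral hypothesis. -/
lemma isUnit_add_smul_one {B : Mat N}
    (hspec : ∀ μ ∈ spectrum ℂ (B.map Complex.ofReal), 0 < μ.re) {t : ℝ} (ht : 0 ≤ t) :
    IsUnit (B + t • (1 : Mat N)) := by
  by_contra h
  rw [Matrix.isUnit_iff_isUnit_det, isUnit_iff_ne_zero, not_not] at h
  have hC : ((B + t • (1 : Mat N)).map Complex.ofReal).det = 0 := by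
    have h2 : Complex.ofRealHom ((B + t • (1 : Mat N)).det) = 0 := by rw [h]; simp
    rw [RingHom.map_det] at h2
    simpa [RingHom.mapMatrix_apply] using (show (B + t • (1 : Mat N)).map Complex.ofRealHom = (B + t • (1 : Mat N)).map Complex.ofReal from rfl) ▸ h2
  have hmap : (B + t • (1 : Mat N)).map Complex.ofReal
      = algebraMap ℂ (Matrix (Fin N) (Fin N) ℂ) ((t : ℝ) : ℂ) + B.map Complex.ofReal := by
    ext i j
    by_cases hij : i = j <;>
      simp [Matrix.map_apply, Matrix.add_apply, Matrix.smul_apply, Matrix.one_apply,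
        Matrix.algebraMap_matrix_apply, hij, add_comm]
  have hnu : ¬ IsUnit ((B + t • (1 : Mat N)).map Complex.ofReal) := by
    rw [Matrix.isUnit_iff_isUnit_det, hC]
    exact fun hh => hh.ne_zero rfl
  have h0 : (0 : ℂ) ∈ spectrum ℂ ((B + t • (1 : Mat N)).map Complex.ofReal) :=
    (spectrum.zero_mem_iff ℂ).mpr hnu
  rw [hmap, ← spectrum.vadd_eq] at h0
  rw [Set.mem_vadd_set] at h0
  obtain ⟨μ, hμ, hμ0⟩ := h0
  have hre := hspec μ hμ
  have : ((t : ℝ) : ℂ) + μ = 0 := hμ0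
  have : μ = -((t : ℝ) : ℂ) := by linear_combination this
  rw [this] at hre
  simp at hre
  linarith

end Stmt3Aux


/-- If `-(A-M)` is Hurwitz, then `A-M` is invertible, `(A-M)⁻¹` has
nonnegative entries, and `u = (A-M)⁻¹ 𝟙` has strictly positive entries. -/
theorem stmt_3 {N : ℕ} (A M : Matrix (Fin N) (Fin N) ℝ)
    (hAdiag : ∀ i j, i ≠ j → A i j = 0) (hApos : ∀ i, 0 < A i i)
    (hMnonneg : ∀ i j, 0 ≤ M i j) (hMdiag : ∀ i, M i i = 0)
    (hHur : IsHurwitz (-(A - M))) :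
    IsUnit (A - M) ∧
    (∀ i j, 0 ≤ (A - M)⁻¹ i j) ∧
    (∀ i, 0 < ((A - M)⁻¹ *ᵥ (fun _ : Fin N => (1 : ℝ))) i) := by
  classical
  set B : Stmt3Aux.Mat N := A - M with hBdef
  -- spectral hypothesis for B
  have hspec : ∀ μ ∈ spectrum ℂ (B.map Complex.ofReal), 0 < μ.re := by
    intro μ hμ
    have hmapneg : (-(A - M)).map Complex.ofReal = -((A - M).map Complex.ofReal) := by
      ext i j; simp [Matrix.map_apply]
    have h1 : -μ ∈ spectrum ℂ ((-(A - M)).map Complex.ofReal) := by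
      rw [hmapneg, ← spectrum.neg_eq]
      exact Set.neg_mem_neg.mpr hμ
    have := hHur _ h1
    simpa using this
  have hinv : ∀ t : ℝ, 0 ≤ t → IsUnit (B + t • (1 : Stmt3Aux.Mat N)) :=
    fun t ht => Stmt3Aux.isUnit_add_smul_one hspec ht
  -- the comparison matrix
  set s : ℝ := ∑ i, A i i with hsdef
  have hs0 : 0 ≤ s := Finset.sum_nonneg fun i _ => (hApos i).le
  have hsge : ∀ i, A i i ≤ s := fun i =>
    Finset.single_le_sum (fun j _ => (hApos j).le) (Finset.mem_univ i)
  set P : Stmt3Aux.Mat N := s • (1 : Stmt3Aux.Mat N) - B with hPdef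
  have hPnn : ∀ i j, 0 ≤ P i j := by
    intro i j
    have : P i j = s * (1 : Stmt3Aux.Mat N) i j - (A i j - M i j) := rfl
    rw [this]
    by_cases hij : i = j
    · subst hij
      simp [Matrix.one_apply, hMdiag i]
      linarith [hsge i]
    · simp [Matrix.one_apply, hij, hAdiag i j hij]
      exact hMnonneg i j
  set T : ℝ := ‖P‖ + 1 with hTdef
  have hT0 : 0 < T := by positivity
  -- base case at t = T
  have hbase : IsUnit (B + T • (1 : Stmt3Aux.Mat N)) ∧
      ∀ i j, 0 ≤ (B + T • (1 : Stmt3Aux.Mat N))⁻¹ i j := by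
    refine Stmt3Aux.base (P := P) (r := s + T) ?_ hPnn ?_
    · rw [hPdef]; module
    · rw [hTdef]; linarith
  -- uniform bound on the resolvent over [0, T]
  have hcont : ContinuousOn (fun t : ℝ => Ring.inverse (B + t • (1 : Stmt3Aux.Mat N)))
      (Set.Icc 0 T) := by
    intro t ht
    have hu := hinv t ht.1
    have hca : ContinuousAt (fun t : ℝ => B + t • (1 : Stmt3Aux.Mat N)) t :=
      (continuousAt_const.add ((continuousAt_id).smul continuousAt_const))
    have hinvca : ContinuousAt Ring.inverse (B + t • (1 : Stmt3Aux.Mat N)) := by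
      have := NormedRing.inverse_continuousAt hu.unit
      rwa [hu.unit_spec] at this
    have hcomp : ContinuousAt (Ring.inverse ∘ fun t : ℝ => B + t • (1 : Stmt3Aux.Mat N)) t :=
      ContinuousAt.comp (g := Ring.inverse)
        (f := fun t : ℝ => B + t • (1 : Stmt3Aux.Mat N)) hinvca hca
    exact hcomp.continuousWithinAt
  obtain ⟨C, hC⟩ := isCompact_Icc.exists_bound_of_continuousOn hcont
  set C1 : ℝ := max C 0 with hC1def
  have hC10 : 0 ≤ C1 := le_max_right _ _
  set δ : ℝ := (C1 + 1)⁻¹ with hδdef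
  have hδ0 : 0 < δ := by positivity
  have hnormle : ∀ t ∈ Set.Icc (0 : ℝ) T, ‖(B + t • (1 : Stmt3Aux.Mat N))⁻¹‖ ≤ C1 := by
    intro t ht
    rw [Matrix.nonsing_inv_eq_ringInverse]
    exact le_trans (hC t ht) (le_max_left _ _)
  -- descent
  have main : ∀ n : ℕ, ∀ t ∈ Set.Icc (0 : ℝ) T, T - n * δ ≤ t →
      ∀ i j, 0 ≤ (B + t • (1 : Stmt3Aux.Mat N))⁻¹ i j := by
    intro n
    induction n with
    | zero =>
      intro t ht hle
      have : t = T := le_antisymm ht.2 (by simpa using hle)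
      subst this
      exact hbase.2
    | succ n ih =>
      intro t ht hle
      by_cases hcase : T - n * δ ≤ t
      · exact ih t ht hcase
      push_neg at hcase
      set t' : ℝ := min (t + δ) T with ht'def
      have htt' : t ≤ t' := le_min (by linarith) ht.2
      have ht'Icc : t' ∈ Set.Icc (0 : ℝ) T := ⟨le_trans ht.1 htt', min_le_right _ _⟩
      have hle' : T - n * δ ≤ t' := by
        apply le_min
        · push_cast at hle ⊢; linarith
        · nlinarith [hδ0.le]
      have hg' := ih t' ht'Icc hle'
      have hd : t' - t ≤ δ := by
        have : t' ≤ t + δ := min_le_left _ _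
        linarith
      have hsmall : (t' - t) * ‖(B + t' • (1 : Stmt3Aux.Mat N))⁻¹‖ < 1 := by
        have h1 : ‖(B + t' • (1 : Stmt3Aux.Mat N))⁻¹‖ ≤ C1 := hnormle t' ht'Icc
        have h2 : (t' - t) * ‖(B + t' • (1 : Stmt3Aux.Mat N))⁻¹‖ ≤ δ * C1 := by
          apply mul_le_mul hd h1 (norm_nonneg _) hδ0.le
        have h3 : δ * C1 < 1 := by
          rw [hδdef]
          rw [inv_mul_lt_iff₀ (by positivity)]
          linarith
        linarith
      exact (Stmt3Aux.step (hinv t' ht'Icc.1) hg' htt' hsmall).2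
  -- conclude at t = 0
  obtain ⟨n, hn⟩ := exists_nat_ge (T / δ)
  have hT_le : T - n * δ ≤ 0 := by
    have : T / δ ≤ n := hn
    rw [div_le_iff₀ hδ0] at this
    linarith
  have h0nn : ∀ i j, 0 ≤ (B + (0 : ℝ) • (1 : Stmt3Aux.Mat N))⁻¹ i j :=
    main n 0 ⟨le_refl 0, hT0.le⟩ hT_le
  have hB0 : B + (0 : ℝ) • (1 : Stmt3Aux.Mat N) = B := by simp
  rw [hB0] at h0nn
  have hBU : IsUnit B := by
    have := hinv 0 (le_refl 0)
    rwa [hB0] at this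
  refine ⟨hBU, h0nn, ?_⟩
  -- positivity of u
  have hdet : IsUnit B.det := (Matrix.isUnit_iff_isUnit_det _).mp hBU
  set u : Fin N → ℝ := B⁻¹ *ᵥ (fun _ : Fin N => (1 : ℝ)) with hudef
  have hunn : ∀ j, 0 ≤ u j := by
    intro j
    have : u j = ∑ k, B⁻¹ j k * 1 := rfl
    rw [this]
    exact Finset.sum_nonneg fun k _ => by simpa using h0nn j k
  have hBu : B *ᵥ u = fun _ : Fin N => (1 : ℝ) := by
    rw [hudef, Matrix.mulVec_mulVec, Matrix.mul_nonsing_inv _ hdet, Matrix.one_mulVec]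
  intro i
  have h1 : ∑ j, B i j * u j = 1 := congrFun hBu i
  have hA : ∑ j, A i j * u j = A i i * u i := by
    apply Finset.sum_eq_single i
    · intro j _ hj
      rw [hAdiag i j (Ne.symm hj), zero_mul]
    · intro h; exact absurd (Finset.mem_univ i) h
  have hsplit : ∑ j, B i j * u j = A i i * u i - ∑ j, M i j * u j := by
    rw [← hA, ← Finset.sum_sub_distrib]
    apply Finset.sum_congr rfl
    intro j _
    have : B i j = A i j - M i j := rfl
    rw [this]; ring
  have hMsum : 0 ≤ ∑ j, M i j * u j :=
    Finset.sum_nonneg fun j _ => mul_nonneg (hMnonneg i j) (hunn j)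
  have hpos : 0 < A i i * u i := by
    rw [hsplit] at h1
    linarith
  have := hApos i
  nlinarith [hunn i]
end

section
/- The matrix −(A−M) is Hurwitz if and only if the spectral radius of MA^{−1} is strictly less than 1, i.e., every eigenvalue of MA^{−1} (viewed as a complex matrix) has modulus strictly less than 1. -/
open Matrix
open scoped ENNReal NNReal

attribute [local instance] Matrix.linftyOpNormedAddCommGroup Matrix.linftyOpNormedRing
  Matrix.linftyOpNormedAlgebra

instance matCS {n : ℕ} : CompleteSpace (Matrix (Fin n) (Fin n) ℂ) :=
  by infer_instance

lemma key_lemma {n : ℕ} (B : Matrix (Fin n) (Fin n) ℝ)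
    (hB : ∀ i j, 0 ≤ B i j) (w : Fin n → ℝ) (hw : ∀ i, 0 ≤ w i) (hw0 : w ≠ 0)
    (hBw : ∀ i, w i ≤ (B *ᵥ w) i) :
    ∃ μ ∈ spectrum ℂ (B.map Complex.ofReal), 1 ≤ ‖μ‖ := by
  set C : Matrix (Fin n) (Fin n) ℂ := B.map Complex.ofReal with hC
  -- step 1 : w ≤ B^k *ᵥ w componentwise
  have step1 : ∀ k : ℕ, ∀ i, w i ≤ ((B ^ k) *ᵥ w) i := by
    intro k
    induction k with
    | zero => intro i; simp [Matrix.one_mulVec]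
    | succ k ih =>
      intro i
      have : (B ^ (k + 1)) *ᵥ w = B *ᵥ ((B ^ k) *ᵥ w) := by
        rw [Matrix.mulVec_mulVec, pow_succ']
      rw [this]
      refine (hBw i).trans ?_
      simp only [Matrix.mulVec, dotProduct]
      exact Finset.sum_le_sum fun j _ => mul_le_mul_of_nonneg_left (ih j) (hB i j)
  -- step 2 : 1 ≤ ‖B^k‖₊
  have hwnn : ‖w‖₊ ≠ 0 := by simpa using hw0
  have step2 : ∀ k : ℕ, 1 ≤ ‖B ^ k‖₊ := by
    intro k
    have h1 : ‖w‖₊ ≤ ‖(B ^ k) *ᵥ w‖₊ := by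
      rw [Pi.nnnorm_def, Pi.nnnorm_def]
      refine Finset.sup_mono_fun fun i _ => ?_
      have := step1 k i
      have h2 : |w i| ≤ |((B ^ k) *ᵥ w) i| := by
        rw [abs_of_nonneg (hw i)]; exact this.trans (le_abs_self _)
      simpa [← NNReal.coe_le_coe, nnnorm, Real.norm_eq_abs] using h2
    have h3 := Matrix.linfty_opNNNorm_mulVec (B ^ k) w
    have h4 : ‖w‖₊ ≤ ‖B ^ k‖₊ * ‖w‖₊ := h1.trans h3
    by_contra hlt
    push_neg at hlt
    have : ‖B ^ k‖₊ * ‖w‖₊ < 1 * ‖w‖₊ :=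
      mul_lt_mul_of_pos_right hlt (pos_iff_ne_zero.mpr hwnn)
    rw [one_mul] at this
    exact absurd (h4.trans_lt this) (lt_irrefl _)
  -- step 3 : ‖C^k‖₊ = ‖B^k‖₊
  have step3 : ∀ k : ℕ, ‖C ^ k‖₊ = ‖B ^ k‖₊ := by
    intro k
    have hmap : C ^ k = (B ^ k).map Complex.ofReal := by
      rw [hC]
      have : (Complex.ofRealHom.mapMatrix (B ^ k) : Matrix (Fin n) (Fin n) ℂ)
          = (Complex.ofRealHom.mapMatrix B) ^ k := map_pow _ _ _
      simp only [RingHom.mapMatrix_apply] at this; exact this.symm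
    rw [hmap, Matrix.linfty_opNNNorm_def, Matrix.linfty_opNNNorm_def]
    simp [Matrix.map_apply]
  -- step 4 : spectral radius ≥ 1
  have step4 : 1 ≤ spectralRadius ℂ C := by
    have htend := spectrum.pow_nnnorm_pow_one_div_tendsto_nhds_spectralRadius C
    refine ge_of_tendsto htend ?_
    filter_upwards [Filter.eventually_ge_atTop 1] with k hk
    have h1 : (1 : ℝ≥0∞) ≤ (‖C ^ k‖₊ : ℝ≥0∞) := by
      rw [step3 k]; exact_mod_cast step2 k
    calc (1 : ℝ≥0∞) = 1 ^ (1 / (k : ℝ)) := (ENNReal.one_rpow _).symm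
      _ ≤ (‖C ^ k‖₊ : ℝ≥0∞) ^ (1 / (k : ℝ)) := by
          exact ENNReal.rpow_le_rpow h1 (by positivity)
  -- step 5 : conclude
  by_contra hcon
  push_neg at hcon
  have hfin : (spectrum ℂ C).Finite := Matrix.finite_spectrum C
  rcases Set.eq_empty_or_nonempty (spectrum ℂ C) with hemp | hne
  · rw [spectralRadius, hemp] at step4
    simp at step4
  · obtain ⟨a, ha, hmax⟩ := Set.exists_max_image _ (fun μ => ‖μ‖₊) hfin hne
    have hbound : spectralRadius ℂ C ≤ (‖a‖₊ : ℝ≥0∞) := by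
      rw [spectralRadius]
      exact iSup₂_le fun μ hμ => by exact_mod_cast hmax μ hμ
    have : (1 : ℝ≥0∞) ≤ (‖a‖₊ : ℝ≥0∞) := step4.trans hbound
    have h1 : (1 : ℝ) ≤ ‖a‖ := by exact_mod_cast this
    exact absurd (hcon a ha) (not_lt.mpr h1)

lemma mem_spec_iff {n : ℕ} (C : Matrix (Fin n) (Fin n) ℂ) (μ : ℂ) :
    μ ∈ spectrum ℂ C ↔ ∃ v, v ≠ 0 ∧ C *ᵥ v = μ • v := by
  rw [spectrum.mem_iff]
  rw [Matrix.isUnit_iff_isUnit_det, isUnit_iff_ne_zero, not_not,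
    ← Matrix.exists_mulVec_eq_zero_iff]
  constructor
  · rintro ⟨v, hv, h⟩
    refine ⟨v, hv, ?_⟩
    rw [Algebra.algebraMap_eq_smul_one, sub_mulVec, smul_mulVec, one_mulVec] at h
    rw [sub_eq_zero] at h; exact h.symm
  · rintro ⟨v, hv, h⟩
    refine ⟨v, hv, ?_⟩
    rw [Algebra.algebraMap_eq_smul_one, sub_mulVec, smul_mulVec, one_mulVec, h, sub_self]

/-- `-(A-M)` is Hurwitz if and only if the spectral radius of `M A⁻¹`
is strictly less than `1`, i.e., every (complex) eigenvalue of `M A⁻¹` has modulus `< 1`. -/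
theorem stmt_5 {N : ℕ} (A M : Matrix (Fin N) (Fin N) ℝ)
    (hAdiag : ∀ i j, i ≠ j → A i j = 0) (hApos : ∀ i, 0 < A i i)
    (hMnonneg : ∀ i j, 0 ≤ M i j) (hMdiag : ∀ i, M i i = 0) :
    IsHurwitz (-(A - M)) ↔
      ∀ μ ∈ spectrum ℂ ((M * A⁻¹).map Complex.ofReal), ‖μ‖ < 1 := by
  set d : Fin N → ℝ := fun i => A i i with hd
  have hA : A = Matrix.diagonal d := by
    ext i j
    by_cases h : i = j
    · subst h; simp [Matrix.diagonal, hd]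
    · simp [Matrix.diagonal, h, hAdiag i j h]
  have hdne : ∀ i, d i ≠ 0 := fun i => (hApos i).ne'
  have hAinv : A⁻¹ = Matrix.diagonal (fun i => (d i)⁻¹) := by
    refine Matrix.inv_eq_right_inv ?_
    rw [hA, Matrix.diagonal_mul_diagonal]
    have h1 : (fun i => d i * (d i)⁻¹) = fun _ => (1 : ℝ) :=
      funext fun i => mul_inv_cancel₀ (hdne i)
    rw [h1, Matrix.diagonal_one]
  have hMA : ∀ i j, (M * A⁻¹) i j = M i j * (d j)⁻¹ := by
    intro i j
    rw [hAinv, Matrix.mul_diagonal]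
  have hMAnn : ∀ i j, 0 ≤ (M * A⁻¹) i j := by
    intro i j
    rw [hMA]
    exact mul_nonneg (hMnonneg i j) (inv_nonneg.mpr (hApos j).le)
  have hMsub : -(A - M) = M - A := neg_sub A M
  constructor
  · -- Hurwitz → ρ < 1
    intro hH μ hμ
    by_contra h1
    push_neg at h1  -- 1 ≤ |μ|
    obtain ⟨v, hv, hev⟩ := (mem_spec_iff _ μ).mp hμ
    set x : Fin N → ℂ := fun i => ((d i : ℂ))⁻¹ * v i with hx
    have hdCne : ∀ i, (d i : ℂ) ≠ 0 := fun i => Complex.ofReal_ne_zero.mpr (hdne i)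
    have hvx : ∀ i, v i = (d i : ℂ) * x i := by
      intro i
      rw [hx]
      show v i = (d i : ℂ) * ((d i : ℂ)⁻¹ * v i)
      rw [← mul_assoc, mul_inv_cancel₀ (hdCne i), one_mul]
    have hxne : x ≠ 0 := by
      intro hcon
      apply hv
      funext i
      rw [hvx i, congrFun hcon i]
      simp
    have heig : ∀ i, ∑ j, (M i j : ℂ) * x j = μ * (d i : ℂ) * x i := by
      intro i
      have h2 := congrFun hev i
      simp only [Matrix.mulVec, dotProduct, Matrix.map_apply, Pi.smul_apply,
        smul_eq_mul] at h2
      have h3 : ∑ j, ((M * A⁻¹) i j : ℂ) * v j = ∑ j, (M i j : ℂ) * x j := by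
        refine Finset.sum_congr rfl fun j _ => ?_
        rw [hMA i j, hx]
        push_cast
        ring
      rw [h3] at h2
      rw [h2, hvx i]
      ring
    set w : Fin N → ℝ := fun i => ‖x i‖ with hw
    have hwnn : ∀ i, 0 ≤ w i := fun i => norm_nonneg _
    have hwne : w ≠ 0 := by
      intro hcon
      apply hxne
      funext i
      exact norm_eq_zero.mp (congrFun hcon i)
    have hkey : ∀ i, d i * w i ≤ ∑ j, M i j * w j := by
      intro i
      have h2 : ‖∑ j, (M i j : ℂ) * x j‖ = ‖μ‖ * (d i * w i) := by
        rw [heig i, norm_mul, norm_mul, Complex.norm_real, Real.norm_eq_abs,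
          abs_of_pos (hApos i)]
        ring
      have h3 : ‖∑ j, (M i j : ℂ) * x j‖ ≤ ∑ j, M i j * w j := by
        refine le_trans (norm_sum_le _ _) ?_
        refine le_of_eq (Finset.sum_congr rfl fun j _ => ?_)
        rw [norm_mul, Complex.norm_real, Real.norm_eq_abs, abs_of_nonneg (hMnonneg i j)]
      have h4 : d i * w i ≤ ‖μ‖ * (d i * w i) := by
        nlinarith [mul_nonneg (hApos i).le (hwnn i)]
      rw [← h2] at h4
      exact h4.trans h3
    -- set up the shift
    set S := spectrum ℂ ((-(A - M)).map Complex.ofReal) with hS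
    have hSfin : S.Finite := Matrix.finite_spectrum _
    obtain ⟨K, hK⟩ : ∃ K : ℝ, ∀ z ∈ S, ‖z‖ ≤ K := by
      obtain ⟨K, hK⟩ := (hSfin.image (fun z : ℂ => ‖z‖)).bddAbove
      exact ⟨K, fun z hz => hK (Set.mem_image_of_mem _ hz)⟩
    obtain ⟨m, hm0, hmle⟩ : ∃ m : ℝ, m < 0 ∧ ∀ z ∈ S, z.re ≤ m := by
      rcases Set.eq_empty_or_nonempty S with hSe | hSe
      · exact ⟨-1, by norm_num, by simp [hSe]⟩
      · obtain ⟨a, ha, hmax⟩ := Set.exists_max_image S (fun z => z.re) hSfin hSe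
        exact ⟨a.re, hH a ha, hmax⟩
    have hsum : (0:ℝ) ≤ ∑ i, d i := Finset.sum_nonneg fun i _ => (hApos i).le
    set c : ℝ := K ^ 2 / (2 * (-m)) + (∑ i, d i) + 1 with hc
    have hKd : (0:ℝ) ≤ K ^ 2 / (2 * (-m)) := div_nonneg (sq_nonneg K) (by linarith)
    have hc0 : 0 < c := by rw [hc]; linarith
    have hcd : ∀ i, d i ≤ c := by
      intro i
      have := Finset.single_le_sum (fun j _ => (hApos j).le) (Finset.mem_univ i)
      rw [hc]; linarith
    have hcm : m < -K ^ 2 / (2 * c) := by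
      have hmpos : (0:ℝ) < 2 * -m := by linarith
      have h2 : K ^ 2 / (2 * -m) < c := by rw [hc]; linarith
      rw [div_lt_iff₀ hmpos] at h2
      rw [lt_div_iff₀ (by linarith : (0:ℝ) < 2 * c)]
      nlinarith
    set Bc : Matrix (Fin N) (Fin N) ℝ :=
      c⁻¹ • (M - A + c • (1 : Matrix (Fin N) (Fin N) ℝ)) with hBc
    have hBcapp : ∀ i j, Bc i j = c⁻¹ * (M i j - A i j + c * (if i = j then 1 else 0)) := by
      intro i j
      rw [hBc]
      simp [Matrix.smul_apply, Matrix.add_apply, Matrix.sub_apply, Matrix.one_apply]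
    have hBcnn : ∀ i j, 0 ≤ Bc i j := by
      intro i j
      rw [hBcapp]
      by_cases hij : i = j
      · subst hij
        rw [if_pos rfl, mul_one, hMdiag i]
        have h2 : A i i ≤ c := by simpa [hd] using hcd i
        have h3 : (0:ℝ) ≤ 0 - A i i + c := by linarith
        exact mul_nonneg (inv_nonneg.mpr hc0.le) h3
      · simp only [if_neg hij, mul_zero, add_zero, hAdiag i j hij, sub_zero]
        exact mul_nonneg (inv_nonneg.mpr hc0.le) (hMnonneg i j)
    have hBcw : ∀ i, w i ≤ (Bc *ᵥ w) i := by
      intro i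
      have hmv : (Bc *ᵥ w) i = c⁻¹ * ((∑ j, M i j * w j) - d i * w i + c * w i) := by
        simp only [Matrix.mulVec, dotProduct]
        have h2 : ∀ j, Bc i j * w j
            = c⁻¹ * (M i j * w j - A i j * w j + c * ((if i = j then (1:ℝ) else 0) * w j)) := by
          intro j; rw [hBcapp i j]; ring
        rw [Finset.sum_congr rfl fun j _ => h2 j, ← Finset.mul_sum]
        congr 1
        have h3 : ∑ j, A i j * w j = d i * w i := by
          rw [hA]; simp [Matrix.diagonal_apply, ite_mul, Finset.sum_ite_eq]
        have h4 : ∑ j, c * ((if i = j then (1:ℝ) else 0) * w j) = c * w i := by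
          simp [mul_ite, ite_mul, mul_one, mul_zero, zero_mul, Finset.sum_ite_eq]
        rw [Finset.sum_add_distrib, Finset.sum_sub_distrib, h3, h4]
      rw [hmv]
      have h5 : c * w i ≤ (∑ j, M i j * w j) - d i * w i + c * w i := by
        have := hkey i; linarith
      calc w i = c⁻¹ * (c * w i) := by field_simp
        _ ≤ _ := mul_le_mul_of_nonneg_left h5 (inv_nonneg.mpr hc0.le)
    obtain ⟨ν, hν, hν1⟩ := key_lemma Bc hBcnn w hwnn hwne hBcw
    obtain ⟨y, hy, hyev⟩ := (mem_spec_iff _ ν).mp hν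
    have hMAy : (M - A).map Complex.ofReal *ᵥ y = (((c:ℂ)) * ν - c) • y := by
      funext i
      have h2 := congrFun hyev i
      simp only [Matrix.mulVec, dotProduct, Matrix.map_apply, Pi.smul_apply,
        smul_eq_mul] at h2 ⊢
      have h3 : ∀ j, (Bc i j : ℂ) * y j
          = (c:ℂ)⁻¹ * (((M i j : ℂ) - (A i j : ℂ)) * y j
              + (c:ℂ) * ((if i = j then (1:ℂ) else 0) * y j)) := by
        intro j
        rw [hBcapp i j]
        rcases eq_or_ne i j with hij | hij
        · rw [if_pos hij, if_pos hij]; push_cast; ring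
        · rw [if_neg hij, if_neg hij]; push_cast; ring
      rw [Finset.sum_congr rfl fun j _ => h3 j, ← Finset.mul_sum] at h2
      have h4 : ∑ j, (c:ℂ) * ((if i = j then (1:ℂ) else 0) * y j) = (c:ℂ) * y i := by
        simp [mul_ite, ite_mul, mul_one, mul_zero, zero_mul, Finset.sum_ite_eq]
      rw [Finset.sum_add_distrib, h4] at h2
      have h5 : (c:ℂ) ≠ 0 := Complex.ofReal_ne_zero.mpr hc0.ne'
      have h6 : (∑ j, ((M i j : ℂ) - (A i j : ℂ)) * y j) + (c:ℂ) * y i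
          = (c:ℂ) * (ν * y i) := by
        have h7 := congrArg (fun z => (c:ℂ) * z) h2
        simpa [← mul_assoc, mul_inv_cancel₀ h5] using h7
      have h8 : ∑ j, (((M - A) i j : ℝ) : ℂ) * y j
          = ∑ j, ((M i j : ℂ) - (A i j : ℂ)) * y j := by
        refine Finset.sum_congr rfl fun j _ => ?_
        rw [Matrix.sub_apply]; push_cast; ring
      rw [h8]
      linear_combination h6
    have hμ' : ((c:ℂ) * ν - c) ∈ S := by
      rw [hS, hMsub]
      exact (mem_spec_iff _ _).mpr ⟨y, hy, hMAy⟩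
    set μ' : ℂ := (c:ℂ) * ν - c with hμ'def
    have hreK : ‖μ'‖ ≤ K := hK μ' hμ'
    have hrem : μ'.re ≤ m := hmle μ' hμ'
    have habs : c ≤ ‖μ' + c‖ := by
      have : μ' + (c:ℂ) = (c:ℂ) * ν := by rw [hμ'def]; ring
      rw [this, norm_mul, Complex.norm_real, Real.norm_eq_abs, abs_of_pos hc0]
      nlinarith
    have hsq : c ^ 2 ≤ (μ'.re + c) ^ 2 + μ'.im ^ 2 := by
      have h2 := pow_le_pow_left₀ hc0.le habs 2
      rw [Complex.sq_norm, Complex.normSq_apply] at h2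
      simpa [Complex.add_re, Complex.add_im, pow_two] using h2
    have habs2 : μ'.re ^ 2 + μ'.im ^ 2 ≤ K ^ 2 := by
      have h2 := pow_le_pow_left₀ (norm_nonneg μ') hreK 2
      rw [Complex.sq_norm, Complex.normSq_apply] at h2
      simpa [pow_two] using h2
    have : m < μ'.re := by
      have h5 : -K^2 / (2*c) ≤ μ'.re := by
        rw [div_le_iff₀ (by linarith : (0:ℝ) < 2 * c)]
        nlinarith
      linarith
    linarith
  · -- ρ < 1 → Hurwitz
    intro h μ hμ
    by_contra hre
    push_neg at hre  -- 0 ≤ μ.re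
    rw [hMsub] at hμ
    obtain ⟨v, hv, hev⟩ := (mem_spec_iff _ μ).mp hμ
    set w : Fin N → ℝ := fun i => ‖v i‖ with hw
    have hwnn : ∀ i, 0 ≤ w i := fun i => norm_nonneg _
    -- eigen equation componentwise : (M.map *ᵥ v) i = (μ + d i) * v i
    have heig : ∀ i, (M.map Complex.ofReal *ᵥ v) i = (μ + (d i : ℂ)) * v i := by
      intro i
      have h1 := congrFun hev i
      simp only [Matrix.mulVec, dotProduct, Matrix.map_apply, Matrix.sub_apply,
        Complex.ofReal_sub, Pi.smul_apply, smul_eq_mul] at h1 ⊢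
      have h2 : ∑ j, ((M i j : ℂ) - (A i j : ℂ)) * v j
          = ∑ j, (M i j : ℂ) * v j - (d i : ℂ) * v i := by
        simp only [sub_mul, Finset.sum_sub_distrib]
        congr 1
        rw [hA]
        simp [Matrix.diagonal_apply, apply_ite, ite_mul, Finset.sum_ite_eq]
      rw [h2] at h1
      rw [sub_eq_iff_eq_add] at h1
      rw [h1]; ring
    -- key inequality : d i * w i ≤ ∑ j M i j * w j
    have hkey : ∀ i, d i * w i ≤ ∑ j, M i j * w j := by
      intro i
      have h1 : ‖(M.map Complex.ofReal *ᵥ v) i‖ = ‖μ + d i‖ * w i := by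
        rw [heig i, norm_mul]
      have h2 : d i ≤ ‖μ + (d i : ℂ)‖ := by
        refine le_trans ?_ (Complex.re_le_norm _)
        simp [Complex.add_re]
        linarith [hre]
      have h3 : ‖(M.map Complex.ofReal *ᵥ v) i‖ ≤ ∑ j, M i j * w j := by
        simp only [Matrix.mulVec, dotProduct, Matrix.map_apply]
        refine le_trans (norm_sum_le _ _) ?_
        refine le_of_eq (Finset.sum_congr rfl fun j _ => ?_)
        rw [norm_mul, Complex.norm_real, Real.norm_eq_abs, abs_of_nonneg (hMnonneg i j)]
      calc d i * w i ≤ ‖μ + d i‖ * w i :=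
            mul_le_mul_of_nonneg_right h2 (hwnn i)
        _ ≤ ∑ j, M i j * w j := by rw [← h1]; exact h3
    -- apply key lemma with u = d * w
    set u : Fin N → ℝ := fun i => d i * w i with hu
    have hunn : ∀ i, 0 ≤ u i := fun i => mul_nonneg (hApos i).le (hwnn i)
    have hune : u ≠ 0 := by
      intro hcon
      apply hv
      funext i
      have : u i = 0 := congrFun hcon i
      rw [hu] at this
      simp only at this
      rcases mul_eq_zero.mp this with h' | h'
      · exact absurd h' (hdne i)
      · exact norm_eq_zero.mp h'
    have hBu : ∀ i, u i ≤ ((M * A⁻¹) *ᵥ u) i := by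
      intro i
      have : ((M * A⁻¹) *ᵥ u) i = ∑ j, M i j * w j := by
        simp only [Matrix.mulVec, dotProduct]
        refine Finset.sum_congr rfl fun j _ => ?_
        rw [hMA i j, hu]
        have := hdne j
        field_simp
      rw [this, hu]
      exact hkey i
    obtain ⟨ν, hν, hν1⟩ := key_lemma (M * A⁻¹) hMAnn u hunn hune hBu
    exact absurd (h ν hν) (not_lt.mpr hν1)
end

section
/- Suppose −(A−M) is Hurwitz and let u = (A−M)^{−1}𝟙. Then for every integer k ≥ 1 and every index i, one has ((MA^{−1})^k)_{ii} < 1 and a_i · u_i ≥ 1 / (1 − ((MA^{−1})^k)_{ii}). -/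
open Matrix NormedSpace Filter
open scoped Topology

namespace Stmt8Aux

variable {n : Type*} [Fintype n] [DecidableEq n]

private def entryLM (i j : n) : Matrix n n ℝ →ₗ[ℝ] ℝ where
  toFun X := X i j
  map_add' _ _ := rfl
  map_smul' _ _ := rfl

private noncomputable def mvLM (x : n → ℂ) : Matrix n n ℂ →ₗ[ℂ] (n → ℂ) where
  toFun X := X *ᵥ x
  map_add' X Y := Matrix.add_mulVec X Y x
  map_smul' c X := Matrix.smul_mulVec c X x

private def entryLM' (u : n → ℝ) (i : n) : Matrix n n ℝ →ₗ[ℝ] ℝ where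
  toFun X := (X *ᵥ u) i
  map_add' X Y := by simp [Matrix.add_mulVec]
  map_smul' c X := by simp [Matrix.smul_mulVec]

private noncomputable def mapLM : Matrix n n ℝ →ₗ[ℝ] Matrix n n ℂ where
  toFun X := X.map Complex.ofReal
  map_add' X Y := by ext a b; simp
  map_smul' c X := by ext a b; simp [Complex.real_smul]

lemma pow_entry_nonneg (B : Matrix n n ℝ) (h : ∀ i j, 0 ≤ B i j) (k : ℕ) :
    ∀ i j, 0 ≤ (B ^ k) i j := by
  induction k with
  | zero => intro i j; by_cases hij : i = j <;> simp [Matrix.one_apply, hij]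
  | succ m ih =>
    intro i j
    rw [pow_succ, Matrix.mul_apply]
    exact Finset.sum_nonneg fun l _ => mul_nonneg (ih i l) (h l j)

lemma entry_exp_nonneg (C : Matrix n n ℝ) (h : ∀ i j, 0 ≤ C i j) (i j : n) :
    0 ≤ exp C i j := by
  letI := Matrix.linftyOpNormedRing (α := ℝ) (n := n)
  letI := Matrix.linftyOpNormedAlgebra (α := ℝ) (n := n) (R := ℝ)
  have hsum : Summable fun k : ℕ => (k.factorial : ℝ)⁻¹ • C ^ k :=
    expSeries_summable' (𝕂 := ℝ) C
  have : exp C i j = ∑' k : ℕ, (k.factorial : ℝ)⁻¹ * (C ^ k) i j := by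
    have := (entryLM (n := n) i j).toContinuousLinearMap.map_tsum hsum
    rw [exp_eq_tsum ℝ]
    exact this
  rw [this]
  exact tsum_nonneg fun k => mul_nonneg (by positivity) (pow_entry_nonneg C h k i j)

lemma exp_metzler_nonneg (A M : Matrix n n ℝ)
    (hAdiag : ∀ i j, i ≠ j → A i j = 0) (hApos : ∀ i, 0 < A i i)
    (hMnonneg : ∀ i j, 0 ≤ M i j) {t : ℝ} (ht : 0 ≤ t) (i j : n) :
    0 ≤ exp (t • (M - A)) i j := by
  classical
  set s : ℝ := ∑ l, A l l with hs
  have hles : ∀ l, A l l ≤ s :=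
    fun l => Finset.single_le_sum (fun m _ => (hApos m).le) (Finset.mem_univ l)
  set C : Matrix n n ℝ := t • (M - A) + (t * s) • 1 with hC
  have hCnn : ∀ a b, 0 ≤ C a b := by
    intro a b
    by_cases hab : a = b
    · subst hab
      simp only [hC, Matrix.add_apply, Matrix.smul_apply, Matrix.sub_apply, Matrix.one_apply_eq,
        smul_eq_mul, mul_one]
      have := hles a
      nlinarith [hMnonneg a a]
    · simp only [hC, Matrix.add_apply, Matrix.smul_apply, Matrix.sub_apply,
        Matrix.one_apply_ne hab, smul_eq_mul, mul_zero, add_zero, hAdiag a b hab, sub_zero]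
      exact mul_nonneg ht (hMnonneg a b)
  have hsplit : t • (M - A) = C + (-(t * s)) • 1 := by
    rw [hC]; module
  have hcomm : Commute C ((-(t * s)) • (1 : Matrix n n ℝ)) :=
    (Commute.one_right C).smul_right _
  have hexp1 : exp ((-(t * s)) • (1 : Matrix n n ℝ))
      = Matrix.diagonal (fun _ => Real.exp (-(t * s))) := by
    rw [Matrix.smul_one_eq_diagonal, Matrix.exp_diagonal, Pi.exp_def]
    ext l
    rw [← Real.exp_eq_exp_ℝ]
  rw [hsplit, Matrix.exp_add_of_commute _ _ hcomm, hexp1, Matrix.mul_diagonal]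
  exact mul_nonneg (entry_exp_nonneg C hCnn i j) (Real.exp_pos _).le

lemma real_decay (p : ℕ) {b : ℝ} (hb : 0 < b) :
    Tendsto (fun t : ℝ => t ^ p * Real.exp (-(b * t))) atTop (𝓝 0) := by
  have h1 : Tendsto (fun t : ℝ => (b * t) ^ p * Real.exp (-(b * t))) atTop (𝓝 0) :=
    (Real.tendsto_pow_mul_exp_neg_atTop_nhds_zero p).comp (tendsto_id.const_mul_atTop hb)
  have h2 := h1.const_mul ((b : ℝ) ^ p)⁻¹
  rw [mul_zero] at h2
  refine h2.congr fun t => ?_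
  rw [mul_pow]
  field_simp

lemma decay_single (Q : Matrix n n ℂ) {μ : ℂ} (hμ : 0 < μ.re) (m : n → ℂ) (k : ℕ)
    (hm : ((Q - μ • 1) ^ k) *ᵥ m = 0) (i : n) :
    Tendsto (fun t : ℝ => (exp (t • (-Q)) *ᵥ m) i) atTop (𝓝 0) := by
  classical
  letI := Matrix.linftyOpNormedRing (α := ℂ) (n := n)
  letI := Matrix.linftyOpNormedAlgebra (α := ℂ) (n := n) (R := ℂ)
  set P : Matrix n n ℂ := Q - μ • 1 with hP
  set w : ℕ → n → ℂ := fun p => ((-P) ^ p) *ᵥ m with hw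
  have hvanish : ∀ p, k ≤ p → w p = 0 := by
    intro p hp
    have hsplit : (-P) ^ p = (-1 : Matrix n n ℂ) ^ p * (P ^ (p - k) * P ^ k) := by
      rw [← pow_add, Nat.sub_add_cancel hp, neg_pow]
    rw [hw]
    simp only [hsplit]
    rw [← Matrix.mulVec_mulVec, ← Matrix.mulVec_mulVec, hm, Matrix.mulVec_zero,
      Matrix.mulVec_zero]
  have key : ∀ t : ℝ, (exp (t • (-Q)) *ᵥ m) i
      = ∑ p ∈ Finset.range k,
          Complex.exp (-(t : ℂ) * μ) * (((p.factorial : ℂ))⁻¹ * (t : ℂ) ^ p * w p i) := by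
    intro t
    have hsplit : t • (-Q) = ((-(t : ℂ) * μ) • (1 : Matrix n n ℂ)) + (t : ℂ) • (-P) := by
      have h0 : t • (-Q) = (t : ℂ) • (-Q) := (algebraMap_smul ℂ t (-Q)).symm
      rw [h0, hP]
      module
    have hcomm : Commute ((-(t : ℂ) * μ) • (1 : Matrix n n ℂ)) ((t : ℂ) • (-P)) :=
      ((Commute.one_left (-P)).smul_left _).smul_right _
    have hexp_scalar : exp ((-(t : ℂ) * μ) • (1 : Matrix n n ℂ))
        = Complex.exp (-(t : ℂ) * μ) • (1 : Matrix n n ℂ) := by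
      have h1 : ((-(t : ℂ) * μ) • (1 : Matrix n n ℂ))
          = algebraMap ℂ (Matrix n n ℂ) (-(t : ℂ) * μ) := (Algebra.algebraMap_eq_smul_one _).symm
      rw [h1]
      refine (map_exp (algebraMap ℂ (Matrix n n ℂ)) (continuous_algebraMap _ _) _).symm.trans ?_
      rw [← Complex.exp_eq_exp_ℂ, Algebra.algebraMap_eq_smul_one]
    have hsum : Summable fun p : ℕ => ((p.factorial : ℂ))⁻¹ • ((t : ℂ) • (-P)) ^ p :=
      expSeries_summable' (𝕂 := ℂ) _
    have hmv : exp ((t : ℂ) • (-P)) *ᵥ m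
        = ∑' p : ℕ, ((p.factorial : ℂ))⁻¹ • ((((t : ℂ) • (-P)) ^ p) *ᵥ m) := by
      have := (mvLM (n := n) m).toContinuousLinearMap.map_tsum hsum
      rw [exp_eq_tsum ℂ]
      simpa [mvLM] using this
    have hterm : ∀ p : ℕ, ((p.factorial : ℂ))⁻¹ • ((((t : ℂ) • (-P)) ^ p) *ᵥ m)
        = (((p.factorial : ℂ))⁻¹ * (t : ℂ) ^ p) • w p := by
      intro p
      rw [smul_pow, Matrix.smul_mulVec, smul_smul, hw]
    have hfin : exp ((t : ℂ) • (-P)) *ᵥ m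
        = ∑ p ∈ Finset.range k, (((p.factorial : ℂ))⁻¹ * (t : ℂ) ^ p) • w p := by
      rw [hmv, tsum_eq_sum (s := Finset.range k)]
      · exact Finset.sum_congr rfl fun p _ => hterm p
      · intro p hp
        rw [hterm p, hvanish p (by simpa using hp), smul_zero]
    calc (exp (t • (-Q)) *ᵥ m) i
        = (Complex.exp (-(t : ℂ) * μ) • (exp ((t : ℂ) • (-P)) *ᵥ m)) i := by
          rw [hsplit, Matrix.exp_add_of_commute _ _ hcomm, hexp_scalar, smul_mul_assoc,
            one_mul, Matrix.smul_mulVec]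
      _ = _ := by
          rw [hfin]
          simp only [Pi.smul_apply, Finset.sum_apply, Pi.smul_apply, smul_eq_mul,
            Finset.mul_sum]
  rw [show (0 : ℂ) = ∑ p ∈ Finset.range k, (0 : ℂ) by simp]
  refine Tendsto.congr (fun t => (key t).symm) (tendsto_finset_sum _ fun p _ => ?_)
  rw [tendsto_zero_iff_norm_tendsto_zero]
  have hbound : ∀ t : ℝ, 0 ≤ t →
      ‖Complex.exp (-(t : ℂ) * μ) * (((p.factorial : ℂ))⁻¹ * (t : ℂ) ^ p * w p i)‖
        ≤ ((p.factorial : ℝ))⁻¹ * ‖w p i‖ * (t ^ p * Real.exp (-(μ.re * t))) := by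
    intro t ht
    rw [norm_mul, norm_mul, norm_mul]
    have h1 : ‖Complex.exp (-(t : ℂ) * μ)‖ = Real.exp (-(μ.re * t)) := by
      rw [Complex.norm_exp]
      congr 1
      simp [Complex.mul_re]
      ring
    have h2 : ‖(((p.factorial : ℂ)))⁻¹‖ = ((p.factorial : ℝ))⁻¹ := by
      rw [norm_inv]
      simp
    have h3 : ‖((t : ℂ)) ^ p‖ = t ^ p := by
      rw [norm_pow, Complex.norm_real, Real.norm_eq_abs, abs_of_nonneg ht]
    rw [h1, h2, h3]
    exact le_of_eq (by ring)
  have h2 := (real_decay p hμ).const_mul (((p.factorial : ℝ))⁻¹ * ‖w p i‖)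
  rw [mul_zero] at h2
  refine squeeze_zero' ?_ ?_ h2
  · exact Eventually.of_forall fun t => norm_nonneg _
  · filter_upwards [eventually_ge_atTop (0 : ℝ)] with t ht
    exact hbound t ht

lemma decay (Q : Matrix n n ℂ) (hspec : ∀ μ ∈ spectrum ℂ Q, 0 < μ.re) (x : n → ℂ) (i : n) :
    Tendsto (fun t : ℝ => (exp (t • (-Q)) *ᵥ x) i) atTop (𝓝 0) := by
  classical
  set L : Module.End ℂ (n → ℂ) := Matrix.toLinAlgEquiv' Q with hL
  have hx : x ∈ ⨆ μ : ℂ, L.maxGenEigenspace μ := by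
    rw [Module.End.iSup_maxGenEigenspace_eq_top]; exact Submodule.mem_top
  obtain ⟨f, hf, hsum⟩ := (Submodule.mem_iSup_iff_exists_finsupp _ x).mp hx
  have hre : ∀ μ ∈ f.support, Tendsto (fun t : ℝ => (exp (t • (-Q)) *ᵥ f μ) i) atTop (𝓝 0) := by
    intro μ hμs
    have hne : f μ ≠ 0 := Finsupp.mem_support_iff.mp hμs
    obtain ⟨k, hk⟩ := (Module.End.mem_maxGenEigenspace L μ (f μ)).mp (hf μ)
    have hμspec : μ ∈ spectrum ℂ Q := by
      have hgen : L.HasGenEigenvalue μ k := by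
        rw [Module.End.hasGenEigenvalue_iff]
        rw [Submodule.ne_bot_iff]
        exact ⟨f μ, Module.End.mem_genEigenspace_nat.mpr hk, hne⟩
      have heig : L.HasEigenvalue μ := Module.End.hasEigenvalue_of_hasGenEigenvalue hgen
      have := Module.End.hasEigenvalue_iff_mem_spectrum.mp heig
      rwa [hL, AlgEquiv.spectrum_eq (Matrix.toLinAlgEquiv' (R := ℂ) (n := n)) Q] at this
    have hkm : ((Q - μ • 1) ^ k) *ᵥ (f μ) = 0 := by
      have h1 : Matrix.toLinAlgEquiv' ((Q - μ • 1) ^ k) = (L - μ • 1) ^ k := by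
        rw [map_pow, map_sub, _root_.map_smul, _root_.map_one]
      calc ((Q - μ • 1) ^ k) *ᵥ f μ
          = (Matrix.toLinAlgEquiv' ((Q - μ • 1) ^ k)) (f μ) :=
            (Matrix.toLinAlgEquiv'_apply _ _).symm
        _ = 0 := by rw [h1]; exact hk
    exact decay_single Q (hspec μ hμspec) (f μ) k hkm i
  have hdecomp : ∀ t : ℝ, (exp (t • (-Q)) *ᵥ x) i
      = ∑ μ ∈ f.support, (exp (t • (-Q)) *ᵥ f μ) i := by
    intro t
    have : exp (t • (-Q)) *ᵥ x = ∑ μ ∈ f.support, exp (t • (-Q)) *ᵥ f μ := by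
      conv_lhs => rw [← hsum]
      rw [Finsupp.sum, ← Matrix.mulVecLin_apply, map_sum]
      simp [Matrix.mulVecLin_apply]
    rw [this, Finset.sum_apply]
  rw [show (0 : ℂ) = ∑ μ ∈ f.support, (0 : ℂ) by simp]
  exact Tendsto.congr (fun t => (hdecomp t).symm) (tendsto_finset_sum _ hre)

lemma exp_map_ofReal (X : Matrix n n ℝ) :
    (exp X).map Complex.ofReal = exp (X.map Complex.ofReal) := by
  letI := Matrix.linftyOpNormedRing (α := ℝ) (n := n)
  letI := Matrix.linftyOpNormedAlgebra (α := ℝ) (n := n) (R := ℝ)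
  letI := Matrix.linftyOpNormedAlgebra (α := ℝ) (n := n) (R := ℚ)
  letI := Matrix.linftyOpNormedRing (α := ℂ) (n := n)
  letI := Matrix.linftyOpNormedAlgebra (α := ℂ) (n := n) (R := ℝ)
  have hcont : Continuous (Complex.ofRealHom.mapMatrix : Matrix n n ℝ →+* Matrix n n ℂ) :=
    (mapLM (n := n)).continuous_of_finiteDimensional
  exact map_exp (Complex.ofRealHom.mapMatrix : Matrix n n ℝ →+* Matrix n n ℂ) hcont X

lemma u_nonneg (A M : Matrix n n ℝ)
    (hAdiag : ∀ i j, i ≠ j → A i j = 0) (hApos : ∀ i, 0 < A i i)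
    (hMnonneg : ∀ i j, 0 ≤ M i j)
    (hdet : IsUnit (A - M).det)
    (hspec : ∀ μ ∈ spectrum ℂ ((A - M).map Complex.ofReal), 0 < μ.re) :
    ∀ i, 0 ≤ ((A - M)⁻¹ *ᵥ (fun _ : n => (1 : ℝ))) i := by
  classical
  intro i
  set u : n → ℝ := (A - M)⁻¹ *ᵥ (fun _ : n => (1 : ℝ)) with hu
  have hQu : (A - M) *ᵥ u = fun _ => (1 : ℝ) := by
    rw [hu, Matrix.mulVec_mulVec, Matrix.mul_nonsing_inv _ hdet, Matrix.one_mulVec]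
  set g : ℝ → ℝ := fun t => (exp (t • (M - A)) *ᵥ u) i with hg
  have hderiv : ∀ t : ℝ, HasDerivAt g ((exp (t • (M - A)) *ᵥ (fun _ => (-1 : ℝ))) i) t := by
    intro t
    letI := Matrix.linftyOpNormedRing (α := ℝ) (n := n)
    letI := Matrix.linftyOpNormedAlgebra (α := ℝ) (n := n) (R := ℝ)
    have hF : HasDerivAt (fun s : ℝ => exp (s • (M - A)))
        (exp (t • (M - A)) * (M - A)) t := hasDerivAt_exp_smul_const (M - A) t
    have hcomp := ((entryLM' (n := n) u i).toContinuousLinearMap.hasFDerivAt).comp_hasDerivAt t hF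
    have hval : (entryLM' (n := n) u i) (exp (t • (M - A)) * (M - A))
        = (exp (t • (M - A)) *ᵥ (fun _ => (-1 : ℝ))) i := by
      show ((exp (t • (M - A)) * (M - A)) *ᵥ u) i = _
      rw [← Matrix.mulVec_mulVec]
      congr 1
      have hMA : (M - A) *ᵥ u = -((A - M) *ᵥ u) := by
        rw [← Matrix.neg_mulVec, neg_sub]
      rw [hMA, hQu]
      ext j
      simp
    rw [← hval]
    exact hcomp
  have hanti : AntitoneOn g (Set.Ici (0 : ℝ)) := by
    apply antitoneOn_of_deriv_nonpos (convex_Ici 0)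
    · exact fun t _ => (hderiv t).continuousAt.continuousWithinAt
    · exact fun t ht => (hderiv t).differentiableAt.differentiableWithinAt
    · intro t ht
      rw [interior_Ici] at ht
      rw [(hderiv t).deriv]
      have hE := exp_metzler_nonneg A M hAdiag hApos hMnonneg (le_of_lt ht)
      have hrw : (exp (t • (M - A)) *ᵥ fun _ => (-1 : ℝ)) i
          = -∑ j, exp (t • (M - A)) i j := by
        simp [Matrix.mulVec, dotProduct]
      rw [hrw, neg_nonpos]
      exact Finset.sum_nonneg fun j _ => hE i j
  have hlim : Tendsto g atTop (𝓝 0) := by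
    set Qc : Matrix n n ℂ := (A - M).map Complex.ofReal with hQc
    set uc : n → ℂ := fun j => (u j : ℂ) with huc
    have hbridge : ∀ t : ℝ, (exp (t • (-Qc)) *ᵥ uc) i = Complex.ofReal (g t) := by
      intro t
      have hmap : (t • (M - A)).map Complex.ofReal = t • (-Qc) := by
        ext a b
        simp only [hQc, Matrix.map_apply, Matrix.smul_apply, Matrix.sub_apply, Matrix.neg_apply,
          smul_eq_mul, Complex.real_smul]
        push_cast
        ring
      have hexp : (exp (t • (M - A))).map Complex.ofReal = exp (t • (-Qc)) := by
        rw [exp_map_ofReal, hmap]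
      rw [← hexp, hg]
      simp only [Matrix.mulVec, dotProduct, Matrix.map_apply, huc]
      push_cast
      rfl
    have hc : Tendsto (fun t : ℝ => (exp (t • (-Qc)) *ᵥ uc) i) atTop (𝓝 0) :=
      decay Qc hspec uc i
    have hcomp := (Complex.continuous_re.tendsto 0).comp hc
    rw [Complex.zero_re] at hcomp
    refine hcomp.congr fun t => ?_
    rw [Function.comp_apply, hbridge t, Complex.ofReal_re]
  have h0 : g 0 = u i := by
    rw [hg]
    simp
  have hev : ∀ᶠ t in atTop, g t ≤ u i := by
    filter_upwards [eventually_ge_atTop (0 : ℝ)] with t ht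
    rw [← h0]
    exact hanti Set.self_mem_Ici ht ht
  exact le_of_tendsto hlim hev

end Stmt8Aux

open Stmt8Aux

/-- If `-(A-M)` is Hurwitz and `u = (A-M)⁻¹ 𝟙`, then for every `k ≥ 1` and
every index `i`, `((M A⁻¹)ᵏ)ᵢᵢ < 1` and `aᵢ uᵢ ≥ 1 / (1 - ((M A⁻¹)ᵏ)ᵢᵢ)`. -/
theorem stmt_8 {N : ℕ} (A M : Matrix (Fin N) (Fin N) ℝ)
    (hAdiag : ∀ i j, i ≠ j → A i j = 0) (hApos : ∀ i, 0 < A i i)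
    (hMnonneg : ∀ i j, 0 ≤ M i j) (hMdiag : ∀ i, M i i = 0)
    (hHur : IsHurwitz (-(A - M))) :
    ∀ k : ℕ, 1 ≤ k → ∀ i,
      ((M * A⁻¹) ^ k) i i < 1 ∧
      1 / (1 - ((M * A⁻¹) ^ k) i i) ≤ A i i * ((A - M)⁻¹ *ᵥ (fun _ : Fin N => (1 : ℝ))) i := by
  classical
  have hdet : IsUnit (A - M).det := by
    rw [isUnit_iff_ne_zero]
    intro hdetz
    have hdet2 : ((-(A - M)).map Complex.ofReal).det = 0 := by
      have h1 : ((-(A - M)).map Complex.ofReal).det = ((-(A - M)).det : ℂ) :=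
        (RingHom.map_det Complex.ofRealHom _).symm
      rw [h1, Matrix.det_neg, hdetz, mul_zero]
      simp
    have h0 : (0 : ℂ) ∈ spectrum ℂ ((-(A - M)).map Complex.ofReal) := by
      rw [spectrum.zero_mem_iff]
      intro hUnit
      rw [Matrix.isUnit_iff_isUnit_det, hdet2] at hUnit
      exact (by simp : ¬ IsUnit (0 : ℂ)) hUnit
    have := hHur 0 h0
    simp at this
  have hspec : ∀ μ ∈ spectrum ℂ ((A - M).map Complex.ofReal), 0 < μ.re := by
    intro μ hμ
    have hmapneg : ((-(A - M)).map Complex.ofReal) = -((A - M).map Complex.ofReal) := by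
      ext a b
      simp
    have hneg : -μ ∈ spectrum ℂ ((-(A - M)).map Complex.ofReal) := by
      rw [hmapneg]
      rw [spectrum.mem_iff] at hμ ⊢
      intro hUnit
      apply hμ
      have hrw : (algebraMap ℂ (Matrix (Fin N) (Fin N) ℂ) (-μ) - -((A - M).map Complex.ofReal))
          = -(algebraMap ℂ (Matrix (Fin N) (Fin N) ℂ) μ - (A - M).map Complex.ofReal) := by
        rw [map_neg]
        abel
      rw [hrw] at hUnit
      exact IsUnit.neg_iff _ |>.mp hUnit
    have := hHur (-μ) hneg
    simp only [Complex.neg_re, neg_lt] at this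
    linarith
  have hu := u_nonneg A M hAdiag hApos hMnonneg hdet hspec
  set u : Fin N → ℝ := (A - M)⁻¹ *ᵥ (fun _ : Fin N => (1 : ℝ)) with hudef
  have hQu : (A - M) *ᵥ u = fun _ => (1 : ℝ) := by
    rw [hudef, Matrix.mulVec_mulVec, Matrix.mul_nonsing_inv _ hdet, Matrix.one_mulVec]
  have hAdiagonal : A = Matrix.diagonal (fun i => A i i) := by
    ext a b
    by_cases hab : a = b
    · subst hab; simp
    · rw [Matrix.diagonal_apply_ne _ hab]; exact hAdiag a b hab
  have hAinv : A⁻¹ = Matrix.diagonal (fun i => (A i i)⁻¹) := by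
    apply Matrix.inv_eq_right_inv
    conv_lhs => rw [hAdiagonal]
    rw [Matrix.diagonal_mul_diagonal]
    ext a b
    by_cases hab : a = b
    · subst hab; simp [mul_inv_cancel₀ (hApos a).ne']
    · simp [Matrix.diagonal_apply_ne _ hab, Matrix.one_apply_ne hab]
  set B : Matrix (Fin N) (Fin N) ℝ := M * A⁻¹ with hB
  have hBnn : ∀ a b, 0 ≤ B a b := by
    intro a b
    rw [hB, hAinv, Matrix.mul_diagonal]
    exact mul_nonneg (hMnonneg a b) (inv_nonneg.mpr (hApos b).le)
  have hBknn := pow_entry_nonneg B hBnn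
  set v : Fin N → ℝ := fun j => A j j * u j with hv
  have hvnn : ∀ j, 0 ≤ v j := fun j => mul_nonneg (hApos j).le (hu j)
  have hAinvv : A⁻¹ *ᵥ v = u := by
    rw [hAinv]
    funext j
    rw [Matrix.mulVec_diagonal]
    rw [hv]
    exact inv_mul_cancel_left₀ (hApos j).ne' (u j)
  have hvid : ∀ j, v j = 1 + (B *ᵥ v) j := by
    intro j
    have h1 : B *ᵥ v = M *ᵥ u := by rw [hB, ← Matrix.mulVec_mulVec, hAinvv]
    have h2 : ((A - M) *ᵥ u) j = (A *ᵥ u) j - (M *ᵥ u) j := by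
      rw [Matrix.sub_mulVec]
      simp
    have h3 : (A *ᵥ u) j = v j := by
      conv_lhs => rw [hAdiagonal]
      rw [Matrix.mulVec_diagonal, hv]
    have h4 := congrFun hQu j
    rw [h2, h3] at h4
    rw [h1]
    linarith
  have hBle : ∀ j, (B *ᵥ v) j ≤ v j := by
    intro j
    have := hvid j
    linarith
  have hmono : ∀ q : ℕ, ∀ (x y : Fin N → ℝ), (∀ j, x j ≤ y j) →
      ∀ j, ((B ^ q) *ᵥ x) j ≤ ((B ^ q) *ᵥ y) j := by
    intro q x y hxy j
    rw [Matrix.mulVec, Matrix.mulVec, dotProduct, dotProduct]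
    exact Finset.sum_le_sum fun l _ => mul_le_mul_of_nonneg_left (hxy l) (hBknn q j l)
  have hkey : ∀ q : ℕ, 1 ≤ q → ∀ j, ((B ^ q) *ᵥ v) j ≤ v j - 1 := by
    intro q hq
    induction q with
    | zero => omega
    | succ m ih =>
      rcases Nat.eq_zero_or_pos m with h0 | hm
      · subst h0
        intro j
        rw [pow_one]
        have := hvid j
        linarith
      · intro j
        have step : ((B ^ (m + 1)) *ᵥ v) j ≤ ((B ^ m) *ᵥ v) j := by
          have hpow : (B ^ (m + 1)) *ᵥ v = (B ^ m) *ᵥ (B *ᵥ v) := by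
            rw [pow_succ, ← Matrix.mulVec_mulVec]
          rw [hpow]
          exact hmono m _ _ hBle j
        exact step.trans (ih hm j)
  intro k hk i
  have hkv := hkey k hk i
  have hsingle : (B ^ k) i i * v i ≤ ((B ^ k) *ᵥ v) i := by
    rw [Matrix.mulVec, dotProduct]
    exact Finset.single_le_sum
      (f := fun j => (B ^ k) i j * v j)
      (fun j _ => mul_nonneg (hBknn k i j) (hvnn j)) (Finset.mem_univ i)
  set c : ℝ := (B ^ k) i i with hc
  have hc0 : 0 ≤ c := hBknn k i i
  have hineq : 1 + c * v i ≤ v i := by linarith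
  have hv1 : 1 ≤ v i := by nlinarith [mul_nonneg hc0 (hvnn i)]
  have hvpos : 0 < v i := by linarith
  have h1c : 1 ≤ (1 - c) * v i := by nlinarith
  have hcl1 : c < 1 := by nlinarith
  constructor
  · exact hcl1
  · rw [div_le_iff₀ (by linarith : (0 : ℝ) < 1 - c)]
    calc (1 : ℝ) ≤ (1 - c) * v i := h1c
      _ = v i * (1 - c) := mul_comm _ _
end

section
/- Suppose −(A−M) is Hurwitz and the vector u = (A−M)^{−1}𝟙 satisfies u ≤ γ𝟙 for some γ > 0. Let k ≥ 1 and let c : {0,1,…,k} → {1,…,N} be a cycle in the graph of MA^{−1}, i.e., c(0) = c(k) and M_{c(l+1),c(l)} > 0 for all 0 ≤ l ≤ k−1, and let w = ∏_{l=0}^{k−1} M_{c(l+1),c(l)} / a_{c(l)} be its weight. Then w < 1 and for every index p in the image of c, 1/(1 − w) ≤ a_p · γ. -/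
open Matrix
open Filter


section aux

attribute [local instance] Matrix.linftyOpNormedRing Matrix.linftyOpNormedAlgebra

variable {n : Type*} [Fintype n] [DecidableEq n]

lemma entry_norm_le (Z : Matrix n n ℂ) (i j : n) : ‖Z i j‖ ≤ ‖Z‖ := by
  have h1 : ‖Z i j‖₊ ≤ ∑ j' : n, ‖Z i j'‖₊ :=
    Finset.single_le_sum (f := fun j' => ‖Z i j'‖₊) (fun _ _ => zero_le) (Finset.mem_univ j)
  have h2 : (∑ j' : n, ‖Z i j'‖₊) ≤ ‖Z‖₊ := by
    rw [Matrix.linfty_opNNNorm_def]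
    exact Finset.le_sup (f := fun i : n => ∑ j' : n, ‖Z i j'‖₊) (Finset.mem_univ i)
  exact_mod_cast h1.trans h2

lemma map_pow_ofReal (Q : Matrix n n ℝ) (m : ℕ) :
    (Q.map Complex.ofReal) ^ m = (Q ^ m).map Complex.ofReal := by
  have h := map_pow (Complex.ofRealHom.mapMatrix (m := n)) Q m
  simp only [RingHom.mapMatrix_apply] at h
  exact h.symm

theorem inv_entries_nonneg [Nonempty n]
    (B : Matrix n n ℝ) (hoff : ∀ i j, i ≠ j → B i j ≤ 0)
    (hspec : ∀ μ ∈ spectrum ℂ (B.map Complex.ofReal), 0 < μ.re) :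
    IsUnit B.det ∧ ∀ i j, 0 ≤ B⁻¹ i j := by
  set B' : Matrix n n ℂ := B.map Complex.ofReal with hB'
  have hdetmap : (B'.det) = (B.det : ℂ) := (RingHom.map_det Complex.ofRealHom B).symm
  have hdet : IsUnit B.det := by
    by_contra hd
    have hd0 : B.det = 0 := by simpa [isUnit_iff_ne_zero, not_not] using hd
    have hnotunit : ¬ IsUnit B' := by
      rw [Matrix.isUnit_iff_isUnit_det, hdetmap, hd0]
      simp
    have h0 := hspec 0 ((spectrum.zero_mem_iff ℂ).mpr hnotunit)
    simp at h0
  refine ⟨hdet, ?_⟩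
  have hKne : (spectrum ℂ B').Nonempty := spectrum.nonempty B'
  have hKc : IsCompact (spectrum ℂ B') := spectrum.isCompact B'
  have hne0 : ∀ μ ∈ spectrum ℂ B', μ ≠ 0 := by
    intro μ hμ h0; have := hspec μ hμ; rw [h0] at this; simp at this
  have hgcont : ContinuousOn (fun μ : ℂ => 2 * μ.re / ‖μ‖ ^ 2) (spectrum ℂ B') := by
    apply ContinuousOn.div
    · fun_prop
    · fun_prop
    · intro μ hμ
      exact pow_ne_zero 2 (norm_ne_zero_iff.mpr (hne0 μ hμ))
  obtain ⟨μ₀, hμ₀K, hμ₀min⟩ := hKc.exists_isMinOn hKne hgcont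
  have hg0 : 0 < 2 * μ₀.re / ‖μ₀‖ ^ 2 := by
    have h1 := hspec μ₀ hμ₀K
    have h2 : (0:ℝ) < ‖μ₀‖ ^ 2 := pow_pos (norm_pos_iff.mpr (hne0 μ₀ hμ₀K)) 2
    exact div_pos (by linarith) h2
  set C : ℝ := ∑ i : n, (1 + |B i i|) with hC
  have hCpos : 0 < C := Finset.sum_pos (fun i _ => by positivity) Finset.univ_nonempty
  have hCB : ∀ i, B i i ≤ C := by
    intro i
    calc B i i ≤ 1 + |B i i| := by
          have := abs_nonneg (B i i); have := le_abs_self (B i i); linarith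
    _ ≤ C := Finset.single_le_sum (f := fun i => 1 + |B i i|)
          (fun i _ => by positivity) (Finset.mem_univ i)
  set h : ℝ := min (2 * μ₀.re / ‖μ₀‖ ^ 2 / 2) C⁻¹ with hh
  have hhpos : 0 < h := lt_min (by linarith) (by positivity)
  have hhB : ∀ i, h * B i i ≤ 1 := by
    intro i
    rcases le_or_gt (B i i) 0 with hb | hb
    · nlinarith
    · have h1 : h ≤ C⁻¹ := min_le_right _ _
      have h2 : C * C⁻¹ = 1 := mul_inv_cancel₀ hCpos.ne'
      nlinarith [hCB i]
  have hmu : ∀ μ ∈ spectrum ℂ B', h * ‖μ‖ ^ 2 < 2 * μ.re := by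
    intro μ hμ
    have h1 : 2 * μ₀.re / ‖μ₀‖ ^ 2 ≤ 2 * μ.re / ‖μ‖ ^ 2 := hμ₀min hμ
    have hn : (0:ℝ) < ‖μ‖ ^ 2 := pow_pos (norm_pos_iff.mpr (hne0 μ hμ)) 2
    have h3 : h < 2 * μ.re / ‖μ‖ ^ 2 :=
      lt_of_le_of_lt (min_le_left _ _) (by linarith)
    calc h * ‖μ‖ ^ 2 < (2 * μ.re / ‖μ‖ ^ 2) * ‖μ‖ ^ 2 := mul_lt_mul_of_pos_right h3 hn
    _ = 2 * μ.re := div_mul_cancel₀ _ hn.ne'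
  set Q : Matrix n n ℝ := 1 - h • B with hQdef
  have hQnn : ∀ i j, 0 ≤ Q i j := by
    intro i j
    rcases eq_or_ne i j with rfl | hij
    · have := hhB i
      simp only [hQdef, Matrix.sub_apply, Matrix.one_apply_eq, Matrix.smul_apply, smul_eq_mul]
      linarith
    · have := hoff i j hij
      simp only [hQdef, Matrix.sub_apply, Matrix.one_apply_ne hij, Matrix.smul_apply, smul_eq_mul]
      nlinarith
  have hQpow : ∀ m : ℕ, ∀ i j, 0 ≤ (Q ^ m) i j := by
    intro m
    induction m with
    | zero =>
        intro i j
        rcases eq_or_ne i j with rfl | hij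
        · simp
        · simp [Matrix.one_apply_ne hij]
    | succ m ih =>
        intro i j
        rw [pow_succ, Matrix.mul_apply]
        exact Finset.sum_nonneg fun l _ => mul_nonneg (ih i l) (hQnn l j)
  have hQ' : Q.map Complex.ofReal = 1 - (h : ℂ) • B' := by
    ext i j
    rcases eq_or_ne i j with rfl | hij
    · simp [hQdef, hB', Matrix.sub_apply, Matrix.one_apply_eq, Matrix.smul_apply,
        Matrix.map_apply]
    · simp [hQdef, hB', Matrix.sub_apply, Matrix.one_apply_ne hij, Matrix.smul_apply,
        Matrix.map_apply]
  have hspecQ : spectralRadius ℂ (Q.map Complex.ofReal) < 1 := by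
    have hforall : ∀ z ∈ spectrum ℂ (Q.map Complex.ofReal), ‖z‖₊ < 1 := by
      intro z hz
      rw [hQ'] at hz
      have hne : ((h : ℂ)) ≠ 0 := by exact_mod_cast hhpos.ne'
      have e1 : (1 : Matrix n n ℂ) - (h : ℂ) • B'
          = algebraMap ℂ (Matrix n n ℂ) 1 - (Units.mk0 (h:ℂ) hne) • B' := by
        simp [Units.smul_def]
      rw [e1, ← spectrum.singleton_sub_eq, spectrum.unit_smul_eq_smul] at hz
      obtain ⟨x, hx, y, hy, hxy⟩ := Set.mem_sub.mp hz
      obtain ⟨μ, hμK, hμy⟩ := hy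
      rw [Set.mem_singleton_iff] at hx
      subst hx
      have hzval : z = 1 - (h:ℂ) * μ := by
        rw [← hxy, ← hμy]; simp [Units.smul_def, smul_eq_mul]
      have hsq : ‖μ‖ ^ 2 = μ.re ^ 2 + μ.im ^ 2 := by
        rw [Complex.sq_norm, Complex.normSq_apply]; ring
      have hmuK := hmu μ hμK
      have hzre : z.re = 1 - h * μ.re := by rw [hzval]; simp
      have hzim : z.im = - (h * μ.im) := by rw [hzval]; simp
      have hznorm : ‖z‖ ^ 2 = z.re ^ 2 + z.im ^ 2 := by
        rw [Complex.sq_norm, Complex.normSq_apply]; ring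
      have hlt : ‖z‖ ^ 2 < 1 := by
        rw [hznorm, hzre, hzim]
        rw [hsq] at hmuK
        nlinarith [hhpos]
      have : ‖z‖ < 1 := by nlinarith [norm_nonneg z]
      exact_mod_cast this
    simpa using spectrum.spectralRadius_lt_of_forall_lt (Q.map Complex.ofReal) hforall
  obtain ⟨r', hρr', hr'1⟩ := exists_between hspecQ
  have hr'top : r' ≠ ⊤ := ne_top_of_lt hr'1
  lift r' to NNReal using hr'top with r
  have hr1 : r < 1 := by exact_mod_cast hr'1
  have hgel := spectrum.pow_nnnorm_pow_one_div_tendsto_nhds_spectralRadius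
    (Q.map Complex.ofReal)
  have hev : ∀ᶠ m : ℕ in atTop,
      ((‖(Q.map Complex.ofReal) ^ m‖₊ : ENNReal)) ^ (1 / (m:ℝ)) < (r : ENNReal) :=
    hgel.eventually_lt_const hρr'
  have hev2 : ∀ᶠ m : ℕ in atTop, ‖(Q ^ m).map Complex.ofReal‖ < (r:ℝ) ^ m := by
    filter_upwards [hev, eventually_ge_atTop 1] with m hm hm1
    have hm0 : (m : ℝ) ≠ 0 := by positivity
    have step : ((‖(Q.map Complex.ofReal) ^ m‖₊ : ENNReal)) < (r : ENNReal) ^ (m : ℝ) := by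
      have h1 := ENNReal.rpow_lt_rpow hm (by positivity : (0:ℝ) < (m:ℝ))
      rwa [← ENNReal.rpow_mul, one_div, inv_mul_cancel₀ hm0, ENNReal.rpow_one] at h1
    rw [ENNReal.rpow_natCast] at step
    have step2 : ‖(Q.map Complex.ofReal) ^ m‖₊ < r ^ m := by exact_mod_cast step
    rw [map_pow_ofReal] at step2
    calc ‖(Q ^ m).map Complex.ofReal‖ = ((‖(Q ^ m).map Complex.ofReal‖₊ : ℝ)) := rfl
    _ < ((r ^ m : NNReal) : ℝ) := by exact_mod_cast step2
    _ = (r:ℝ) ^ m := by norm_cast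
  have hent : ∀ i j, Tendsto (fun m => (Q ^ m) i j) atTop (nhds 0) := by
    intro i j
    have hbound : ∀ᶠ m : ℕ in atTop, ‖(Q ^ m) i j‖ ≤ (r:ℝ) ^ m := by
      filter_upwards [hev2] with m hm
      calc ‖(Q ^ m) i j‖ = ‖((Q ^ m).map Complex.ofReal) i j‖ := by
            rw [Matrix.map_apply, Complex.norm_real]
      _ ≤ ‖(Q ^ m).map Complex.ofReal‖ := entry_norm_le _ i j
      _ ≤ (r:ℝ) ^ m := le_of_lt hm
    exact squeeze_zero_norm' hbound
      (tendsto_pow_atTop_nhds_zero_of_lt_one r.coe_nonneg (by exact_mod_cast hr1))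
  intro i j
  have hid : ∀ m : ℕ, h • (∑ t ∈ Finset.range m, Q ^ t) = B⁻¹ - B⁻¹ * Q ^ m := by
    intro m
    have h1 : (1 - Q) * (∑ t ∈ Finset.range m, Q ^ t) = 1 - Q ^ m := by
      have hg := mul_geom_sum Q m
      rw [← neg_sub Q 1, ← neg_sub (Q ^ m) 1, neg_mul, hg]
    have h2 : (1 : Matrix n n ℝ) - Q = h • B := sub_sub_cancel 1 (h • B)
    rw [h2] at h1
    have h3 : B⁻¹ * ((h • B) * (∑ t ∈ Finset.range m, Q ^ t)) = B⁻¹ * (1 - Q ^ m) := by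
      rw [h1]
    rw [← mul_assoc, Matrix.mul_smul, Matrix.nonsing_inv_mul B hdet] at h3
    rw [Matrix.smul_mul, one_mul] at h3
    rw [h3, mul_sub, mul_one]
  have hineq : ∀ m : ℕ, (B⁻¹ * Q ^ m) i j ≤ B⁻¹ i j := by
    intro m
    have hm := congrFun (congrFun (hid m) i) j
    rw [Matrix.smul_apply, Matrix.sub_apply, smul_eq_mul] at hm
    have hS : 0 ≤ (∑ t ∈ Finset.range m, Q ^ t) i j := by
      rw [Matrix.sum_apply]
      exact Finset.sum_nonneg fun t _ => hQpow t i j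
    nlinarith
  have htend : Tendsto (fun m => (B⁻¹ * Q ^ m) i j) atTop (nhds 0) := by
    have heq : ∀ m, (B⁻¹ * Q ^ m) i j = ∑ l, B⁻¹ i l * (Q ^ m) l j :=
      fun m => Matrix.mul_apply
    simp_rw [heq]
    rw [show (0:ℝ) = ∑ l : n, B⁻¹ i l * 0 by simp]
    exact tendsto_finset_sum _ fun l _ => (hent l j).const_mul _
  exact le_of_tendsto htend (Eventually.of_forall hineq)

end aux

/-- Suppose `-(A-M)` is Hurwitz and `u = (A-M)⁻¹ 𝟙 ≤ γ 𝟙` with `γ > 0`.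
For every cycle `c(0), …, c(k) = c(0)` (with `M_{c(l+1), c(l)} > 0` for `l < k`) of weight
`w = ∏_{l<k} M_{c(l+1), c(l)} / a_{c(l)}`, one has `w < 1` and `1/(1-w) ≤ a_p γ` for every
node `p` on the cycle. -/
theorem stmt_9 {N : ℕ} (A M : Matrix (Fin N) (Fin N) ℝ)
    (hAdiag : ∀ i j, i ≠ j → A i j = 0) (hApos : ∀ i, 0 < A i i)
    (hMnonneg : ∀ i j, 0 ≤ M i j) (hMdiag : ∀ i, M i i = 0)
    (hHur : IsHurwitz (-(A - M)))
    (γ : ℝ) (hγ : 0 < γ)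
    (hu : ∀ i, ((A - M)⁻¹ *ᵥ (fun _ : Fin N => (1 : ℝ))) i ≤ γ)
    (k : ℕ) (hk : 1 ≤ k) (c : ℕ → Fin N)
    (hclosed : c 0 = c k)
    (hedges : ∀ l < k, 0 < M (c (l + 1)) (c l)) :
    (∏ l ∈ Finset.range k, M (c (l + 1)) (c l) / A (c l) (c l)) < 1 ∧
    ∀ p : Fin N, (∃ l ≤ k, c l = p) →
      1 / (1 - ∏ l ∈ Finset.range k, M (c (l + 1)) (c l) / A (c l) (c l)) ≤ A p p * γ := by
  haveI : Nonempty (Fin N) := ⟨c 0⟩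
  have hoff : ∀ i j, i ≠ j → (A - M) i j ≤ 0 := by
    intro i j hij
    rw [Matrix.sub_apply, hAdiag i j hij]
    have := hMnonneg i j
    linarith
  have hspec : ∀ μ ∈ spectrum ℂ ((A - M).map Complex.ofReal), 0 < μ.re := by
    intro μ hμ
    have hnegmap : (-(A - M)).map Complex.ofReal = -((A - M).map Complex.ofReal) := by
      ext i j; simp [Matrix.map_apply]
    have hmem : -μ ∈ spectrum ℂ ((-(A - M)).map Complex.ofReal) := by
      rw [hnegmap, ← spectrum.neg_eq]
      exact Set.neg_mem_neg.mpr hμ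
    have hres := hHur (-μ) hmem
    rw [Complex.neg_re] at hres
    linarith
  obtain ⟨hdet, hinv⟩ := inv_entries_nonneg (A - M) hoff hspec
  set u : Fin N → ℝ := (A - M)⁻¹ *ᵥ (fun _ => (1:ℝ)) with hu_def
  have hu0 : ∀ i, 0 ≤ u i := by
    intro i
    rw [hu_def]
    simp only [Matrix.mulVec, dotProduct, mul_one]
    exact Finset.sum_nonneg fun j _ => hinv i j
  have hBu : (A - M) *ᵥ u = fun _ => (1:ℝ) := by
    rw [hu_def, Matrix.mulVec_mulVec, Matrix.mul_nonsing_inv _ hdet, Matrix.one_mulVec]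
  have hxkey : ∀ i j0, 1 + M i j0 * u j0 ≤ A i i * u i := by
    intro i j0
    have h1 := congrFun hBu i
    simp only [Matrix.mulVec, dotProduct] at h1
    have h2 : ∑ j, (A - M) i j * u j = A i i * u i - ∑ j, M i j * u j := by
      have he : ∀ j, (A - M) i j * u j = A i j * u j - M i j * u j := by
        intro j; rw [Matrix.sub_apply]; ring
      rw [Finset.sum_congr rfl fun j _ => he j, Finset.sum_sub_distrib]
      congr 1
      rw [Finset.sum_eq_single i (fun j _ hji => by rw [hAdiag i j (Ne.symm hji), zero_mul])
        (fun hi => absurd (Finset.mem_univ i) hi)]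
    have h3 : A i i * u i = 1 + ∑ j, M i j * u j := by
      rw [h2] at h1; linarith
    have h4 : M i j0 * u j0 ≤ ∑ j, M i j * u j :=
      Finset.single_le_sum (f := fun j => M i j * u j)
        (fun j _ => mul_nonneg (hMnonneg i j) (hu0 j)) (Finset.mem_univ j0)
    linarith
  set x : Fin N → ℝ := fun p => A p p * u p with hx_def
  have hx0 : ∀ p, 0 ≤ x p := fun p => mul_nonneg (hApos p).le (hu0 p)
  set r : ℕ → ℝ := fun l => M (c (l+1)) (c l) / A (c l) (c l) with hrdef
  have hr0 : ∀ l, 0 ≤ r l := fun l => div_nonneg (hMnonneg _ _) (hApos _).le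
  have hstep : ∀ l, 1 + r l * x (c l) ≤ x (c (l+1)) := by
    intro l
    have hne := (hApos (c l)).ne'
    have he : r l * x (c l) = M (c (l+1)) (c l) * u (c l) := by
      rw [hrdef, hx_def]
      field_simp
    rw [he]
    exact hxkey _ _
  have hchain : ∀ a b : ℕ, a < b →
      1 + (∏ l ∈ Finset.Ico a b, r l) * x (c a) ≤ x (c b) := by
    intro a b hab
    induction b, hab using Nat.le_induction with
    | base =>
        rw [Finset.prod_Ico_succ_top (le_refl a), Finset.Ico_self, Finset.prod_empty, one_mul]
        exact hstep a
    | succ b hab ih =>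
        have h1 := hstep b
        have h2 : (∏ l ∈ Finset.Ico a (b+1), r l) = (∏ l ∈ Finset.Ico a b, r l) * r b :=
          Finset.prod_Ico_succ_top (Nat.le_of_succ_le hab) _
        have hP : 0 ≤ ∏ l ∈ Finset.Ico a b, r l := Finset.prod_nonneg fun l _ => hr0 l
        rw [h2]
        nlinarith [hr0 b, hx0 (c a), hx0 (c b)]
  have hrange : ∀ b : ℕ, (∏ l ∈ Finset.Ico 0 b, r l) = ∏ l ∈ Finset.range b, r l := by
    intro b; rw [Finset.range_eq_Ico]
  have hkey : ∀ l₀, l₀ ≤ k → 1 + (∏ l ∈ Finset.range k, r l) * x (c l₀) ≤ x (c l₀) := by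
    intro l₀ hl₀
    by_cases h0 : l₀ = 0
    · subst h0
      have := hchain 0 k (by omega)
      rw [hrange] at this
      rw [hclosed] at this ⊢
      exact this
    by_cases hkk : l₀ = k
    · have := hchain 0 k (by omega)
      rw [hrange] at this
      rw [hclosed] at this
      rw [hkk]
      exact this
    · have hl1 : 0 < l₀ := by omega
      have hl2 : l₀ < k := by omega
      have hA1 := hchain 0 l₀ hl1
      have hB2 := hchain l₀ k hl2
      have hsplit : (∏ l ∈ Finset.Ico 0 l₀, r l) * (∏ l ∈ Finset.Ico l₀ k, r l)
          = ∏ l ∈ Finset.range k, r l := by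
        rw [Finset.prod_Ico_consecutive _ (Nat.zero_le l₀) (le_of_lt hl2), ← hrange]
      have hcc : x (c 0) = x (c k) := by rw [hclosed]
      have hP0 : 0 ≤ ∏ l ∈ Finset.Ico 0 l₀, r l := Finset.prod_nonneg fun l _ => hr0 l
      have hP1 : 0 ≤ ∏ l ∈ Finset.Ico l₀ k, r l := Finset.prod_nonneg fun l _ => hr0 l
      rw [← hsplit]
      nlinarith [hx0 (c l₀), hx0 (c 0)]
  have hw0 : 0 ≤ ∏ l ∈ Finset.range k, r l := Finset.prod_nonneg fun l _ => hr0 l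
  have hfin : ∀ p : Fin N, (∃ l ≤ k, c l = p) →
      (∏ l ∈ Finset.range k, r l) < 1 ∧
      1 / (1 - ∏ l ∈ Finset.range k, r l) ≤ A p p * γ := by
    rintro p ⟨l₀, hl₀, hcp⟩
    have hk1 := hkey l₀ hl₀
    rw [hcp] at hk1
    have hw1 : (∏ l ∈ Finset.range k, r l) < 1 := by nlinarith [hx0 p]
    refine ⟨hw1, ?_⟩
    have hxb : 1 / (1 - ∏ l ∈ Finset.range k, r l) ≤ x p := by
      rw [div_le_iff₀ (by linarith)]
      nlinarith
    have hpg : x p ≤ A p p * γ := mul_le_mul_of_nonneg_left (hu p) (hApos p).le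
    linarith
  have hweq : (∏ l ∈ Finset.range k, r l)
      = ∏ l ∈ Finset.range k, M (c (l + 1)) (c l) / A (c l) (c l) := rfl
  rw [← hweq]
  exact ⟨(hfin (c 0) ⟨0, Nat.zero_le k, rfl⟩).1, fun p hp => (hfin p hp).2⟩
end

section
/- Suppose −(A−M) is Hurwitz, let u = (A−M)^{−1}𝟙 and u_max = max_i u_i. Let i ≠ j with M_{ij} = 0, let m > 0, set σ = e_jᵀ(A−M)^{−1}e_i, and suppose that −(A − M − m e_i e_jᵀ) is also Hurwitz and that m·σ < 1. Then the vector ū = (A − M − m e_i e_jᵀ)^{−1}𝟙 satisfies ū = u + (m/(1 − m·σ))·(A−M)^{−1}e_i·u_j, and ū ≤ u_max·𝟙 holds if and only if (m/(1 − m·σ))·(A−M)^{−1}e_i·u_j ≤ u_max·𝟙 − u. (Hence adding the edge (j → i) with weight m is a scalable change if and only if this inequality holds.) -/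
open Matrix


lemma hurwitz_unit {n : Type*} [Fintype n] [DecidableEq n] (B : Matrix n n ℝ)
    (h : ∀ μ ∈ spectrum ℂ ((-B).map Complex.ofReal), μ.re < 0) : IsUnit B.det := by
  by_contra hd
  have hdet : B.det = 0 := by simpa [isUnit_iff_ne_zero] using hd
  have h0 : ¬ IsUnit ((-B).map Complex.ofReal) := by
    rw [Matrix.isUnit_iff_isUnit_det]
    have h1 := RingHom.map_det (Complex.ofRealHom) (-B)
    simp only [RingHom.mapMatrix_apply] at h1
    have h2 : ((-B).map Complex.ofReal) = (-B).map ⇑Complex.ofRealHom := rfl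
    rw [h2, ← h1]
    simp [Matrix.det_neg, hdet]
  have h2 : (0 : ℂ) ∈ spectrum ℂ ((-B).map Complex.ofReal) := spectrum.zero_mem (R := ℂ) h0
  simpa using h 0 h2

lemma stdBasis_mulVec' {n : Type*} [Fintype n] [DecidableEq n] (i j : n) (m : ℝ) (x : n → ℝ) :
    (Matrix.single i j m) *ᵥ x = fun p => if p = i then m * x j else 0 := by
  funext p
  simp [Matrix.mulVec, dotProduct, Matrix.single, ite_and, eq_comm]

/-- (Addition of an edge: necessary and sufficient condition.) Suppose
`-(A-M)` is Hurwitz, `u = (A-M)⁻¹ 𝟙`, `u_max = maxᵢ uᵢ`. Let `i ≠ j`, `Mᵢⱼ = 0`, `m > 0`,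
`σ = eⱼᵀ (A-M)⁻¹ eᵢ`, and suppose `-(A - M - m eᵢ eⱼᵀ)` is Hurwitz with `m σ < 1`. Then
`ū = (A - M - m eᵢ eⱼᵀ)⁻¹ 𝟙 = u + (m/(1 - m σ)) uⱼ · (A-M)⁻¹ eᵢ`, and `ū ≤ u_max 𝟙` iff
`(m/(1 - m σ)) uⱼ · (A-M)⁻¹ eᵢ ≤ u_max 𝟙 - u`. -/
theorem stmt_13 {N : ℕ} (hN : 0 < N) (A M : Matrix (Fin N) (Fin N) ℝ)
    (hAdiag : ∀ p q, p ≠ q → A p q = 0) (hApos : ∀ p, 0 < A p p)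
    (hMnonneg : ∀ p q, 0 ≤ M p q) (hMdiag : ∀ p, M p p = 0)
    (hHur : IsHurwitz (-(A - M)))
    (i j : Fin N) (hij : i ≠ j) (hMij : M i j = 0) (m : ℝ) (hm : 0 < m)
    (hHur2 : IsHurwitz (-(A - M - Matrix.single i j m)))
    (hσ : m * (A - M)⁻¹ j i < 1) :
    haveI : Nonempty (Fin N) := Fin.pos_iff_nonempty.mp hN
    let u : Fin N → ℝ := (A - M)⁻¹ *ᵥ (fun _ => (1 : ℝ))
    let umax : ℝ := Finset.univ.sup' Finset.univ_nonempty u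
    let ubar : Fin N → ℝ := (A - M - Matrix.single i j m)⁻¹ *ᵥ (fun _ => (1 : ℝ))
    ubar = u + (m / (1 - m * (A - M)⁻¹ j i) * u j) • ((A - M)⁻¹ *ᵥ Pi.single i 1) ∧
    ((∀ p, ubar p ≤ umax) ↔
      ∀ p, m / (1 - m * (A - M)⁻¹ j i) * u j * ((A - M)⁻¹ *ᵥ Pi.single i 1) p ≤
        umax - u p) := by
  haveI : Nonempty (Fin N) := Fin.pos_iff_nonempty.mp hN
  intro u umax ubar
  set B := A - M with hB
  set E := Matrix.single i j m with hE
  have hBu : IsUnit B.det := hurwitz_unit B hHur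
  have hCu : IsUnit (B - E).det := hurwitz_unit _ hHur2
  set σ := B⁻¹ j i with hσdef
  have hσne : (1 : ℝ) - m * σ ≠ 0 := by
    have : 0 < 1 - m * σ := by linarith
    linarith
  set v : Fin N → ℝ := B⁻¹ *ᵥ Pi.single i 1 with hv
  set c : ℝ := m / (1 - m * σ) * u j with hc
  -- B *ᵥ u = 1
  have hBu1 : B *ᵥ u = fun _ => (1 : ℝ) := by
    show B *ᵥ (B⁻¹ *ᵥ _) = _
    rw [Matrix.mulVec_mulVec, Matrix.mul_nonsing_inv B hBu, Matrix.one_mulVec]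
  have hBv : B *ᵥ v = Pi.single i 1 := by
    show B *ᵥ (B⁻¹ *ᵥ _) = _
    rw [Matrix.mulVec_mulVec, Matrix.mul_nonsing_inv B hBu, Matrix.one_mulVec]
  have hvj : v j = σ := by
    rw [hv, hσdef]
    simp [Matrix.mulVec_single]
  -- key: (B - E) *ᵥ (u + c • v) = 1
  have hkey : (B - E) *ᵥ (u + c • v) = fun _ => (1 : ℝ) := by
    funext p
    have h1 : ((B - E) *ᵥ (u + c • v)) p
        = (B *ᵥ u) p + c * (B *ᵥ v) p - (E *ᵥ (u + c • v)) p := by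
      rw [Matrix.sub_mulVec, Matrix.mulVec_add, Matrix.mulVec_smul]
      simp [smul_eq_mul]
      try ring
    rw [h1, hBu1, hBv, hE, stdBasis_mulVec']
    by_cases hp : p = i
    · subst hp
      simp [Pi.single_apply, hij, hvj, smul_eq_mul]
      rw [hc]
      field_simp
      try ring
    · simp [Pi.single_apply, hp]
  have hfirst : ubar = u + c • v := by
    have : ubar = (B - E)⁻¹ *ᵥ ((B - E) *ᵥ (u + c • v)) := by rw [hkey]
    rw [this, Matrix.mulVec_mulVec, Matrix.nonsing_inv_mul _ hCu, Matrix.one_mulVec]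
  refine ⟨hfirst, ?_⟩
  constructor
  · intro h p
    have hp := h p
    rw [hfirst] at hp
    simp only [Pi.add_apply, Pi.smul_apply, smul_eq_mul] at hp
    rw [hc] at hp ⊢
    linarith [hp]
  · intro h p
    have hp := h p
    rw [hfirst]
    simp only [Pi.add_apply, Pi.smul_apply, smul_eq_mul]
    linarith [hp]
end

section
/- Suppose −(A−M) is Hurwitz, let i ≠ j with M_{ij} = 0 and m > 0, and suppose −(A − M − m e_i e_jᵀ) is also Hurwitz. Then (A − M − m e_i e_jᵀ)^{−1}𝟙 ≥ (A−M)^{−1}𝟙 entrywise; that is, adding an edge can never decrease the vector u = (A−M)^{−1}𝟙 and hence can never improve the robustness bound. -/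
open Matrix

open Filter Finset
open scoped Pointwise ENNReal NNReal Topology

section Aux
attribute [local instance] Matrix.linftyOpNormedAddCommGroup Matrix.linftyOpNormedRing
  Matrix.linftyOpNormedAlgebra

variable {N : ℕ}

lemma hur_re_pos (B : Matrix (Fin N) (Fin N) ℝ) (h : IsHurwitz (-B)) :
    ∀ μ ∈ spectrum ℂ (B.map Complex.ofReal), 0 < μ.re := by
  intro μ hμ
  have h1 : -μ ∈ spectrum ℂ ((-B).map Complex.ofReal) := by
    have : (-B).map Complex.ofReal = -(B.map Complex.ofReal) := by
      ext p q; simp [Matrix.map_apply]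
    rw [this, ← spectrum.neg_eq]
    exact Set.neg_mem_neg.mpr hμ
  have := h _ h1
  simpa using this

lemma hur_isUnit_det (B : Matrix (Fin N) (Fin N) ℝ) (h : IsHurwitz (-B)) :
    IsUnit B.det := by
  by_contra hd
  have hd0 : B.det = 0 := by simpa [isUnit_iff_ne_zero] using hd
  have hdc : (B.map Complex.ofReal).det = 0 := by
    have hmap : B.map Complex.ofReal = Complex.ofRealHom.mapMatrix B := rfl
    rw [hmap, ← RingHom.map_det Complex.ofRealHom B, hd0]
    simp
  have : (0:ℂ) ∈ spectrum ℂ (B.map Complex.ofReal) := by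
    rw [spectrum.mem_iff]
    simp only [map_zero, zero_sub, IsUnit.neg_iff]
    rw [Matrix.isUnit_iff_isUnit_det, hdc]
    exact not_isUnit_zero
  have := hur_re_pos B h 0 this
  simp at this

/-- entry bound for the linfty operator norm -/
lemma entry_le_norm (Ac : Matrix (Fin N) (Fin N) ℂ) (p q : Fin N) : ‖Ac p q‖ ≤ ‖Ac‖ := by
  have h1 : ‖Ac p q‖₊ ≤ ∑ j, ‖Ac p j‖₊ :=
    Finset.single_le_sum (f := fun j => ‖Ac p j‖₊) (fun _ _ => zero_le') (Finset.mem_univ q)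
  have h2 : (∑ j, ‖Ac p j‖₊) ≤ ‖Ac‖₊ := by
    rw [Matrix.linfty_opNNNorm_def]
    exact Finset.le_sup (f := fun i => ∑ j, ‖Ac i j‖₊) (Finset.mem_univ p)
  exact_mod_cast h1.trans h2

end Aux

section Aux2
attribute [local instance] Matrix.linftyOpNormedAddCommGroup Matrix.linftyOpNormedRing
  Matrix.linftyOpNormedAlgebra

variable {N : ℕ}

lemma zmatrix_inv_nonneg (B : Matrix (Fin N) (Fin N) ℝ)
    (hoff : ∀ p q, p ≠ q → B p q ≤ 0) (hH : IsHurwitz (-B)) :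
    ∀ p q, 0 ≤ B⁻¹ p q := by
  rcases Nat.eq_zero_or_pos N with h0 | hpos
  · subst h0; intro p; exact absurd p.isLt (by omega)
  haveI : NeZero N := ⟨by omega⟩
  haveI : CompleteSpace (Matrix (Fin N) (Fin N) ℂ) := FiniteDimensional.complete ℂ _
  set Bc := B.map Complex.ofReal with hBcdef
  have hσfin : (spectrum ℂ Bc).Finite := Matrix.finite_spectrum Bc
  have hrepos := hur_re_pos B hH
  -- choose the shift s
  obtain ⟨C, hC⟩ := (hσfin.image (fun μ => ‖μ‖^2 / (2 * μ.re))).bddAbove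
  set D : ℝ := Finset.univ.sup' (Finset.univ_nonempty) (fun p : Fin N => B p p) with hD
  set s : ℝ := max C (max D 0) + 1 with hsdef
  have hs0 : 0 < s := by
    have : (0:ℝ) ≤ max C (max D 0) := le_trans (le_max_right D 0) (le_max_right C _)
    linarith
  have hsB : ∀ p, B p p ≤ s := by
    intro p
    have h1 : B p p ≤ D := Finset.le_sup' (fun p : Fin N => B p p) (Finset.mem_univ p)
    have : D ≤ max C (max D 0) := le_trans (le_max_left D 0) (le_max_right C _)
    linarith
  have hsμ : ∀ μ ∈ spectrum ℂ Bc, ‖μ‖^2 < 2 * s * μ.re := by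
    intro μ hμ
    have hre : 0 < μ.re := hrepos μ hμ
    have h1 : ‖μ‖^2 / (2 * μ.re) ≤ C := hC ⟨μ, hμ, rfl⟩
    have h2 : C < s := by
      have : C ≤ max C (max D 0) := le_max_left _ _
      linarith
    have h3 : ‖μ‖^2 / (2 * μ.re) < s := lt_of_le_of_lt h1 h2
    rw [div_lt_iff₀ (by linarith)] at h3
    nlinarith
  -- the nonnegative matrix Q
  set Q : Matrix (Fin N) (Fin N) ℝ := 1 - s⁻¹ • B with hQdef
  have hQnn : ∀ p q, 0 ≤ Q p q := by
    intro p q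
    simp only [hQdef, Matrix.sub_apply, Matrix.smul_apply, Matrix.one_apply, smul_eq_mul]
    rcases eq_or_ne p q with rfl | hpq
    · simp only [if_pos rfl]
      have h1 := hsB p
      have h2 : s⁻¹ * B p p ≤ s⁻¹ * s :=
        mul_le_mul_of_nonneg_left h1 (by positivity)
      rw [inv_mul_cancel₀ hs0.ne'] at h2
      simp only [eq_self_iff_true, if_true]
      linarith
    · simp only [if_neg hpq]
      have := hoff p q hpq
      have h1 : s⁻¹ * B p q ≤ 0 := mul_nonpos_of_nonneg_of_nonpos (by positivity) this
      linarith
  set y : Matrix (Fin N) (Fin N) ℂ := 1 - ((s:ℂ))⁻¹ • Bc with hydef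
  have hyQ : y = Complex.ofRealHom.mapMatrix Q := by
    ext p q
    simp only [hydef, hQdef, RingHom.mapMatrix_apply, Matrix.map_apply, Matrix.sub_apply,
      Matrix.smul_apply, Matrix.one_apply, smul_eq_mul, hBcdef, Complex.ofRealHom_eq_coe]
    push_cast
    split <;> simp
  -- all eigenvalues of y lie strictly inside the unit disc
  have hyspec : ∀ μ ∈ spectrum ℂ y, ‖μ‖₊ < 1 := by
    intro μ hμ
    have hs0' : ((s:ℂ)) ≠ 0 := by exact_mod_cast hs0.ne'
    set u : ℂˣ := Units.mk0 ((s:ℂ))⁻¹ (inv_ne_zero hs0') with hu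
    have hsmul := spectrum.unit_smul_eq_smul Bc u
    have h1 : μ ∈ ({(1:ℂ)} : Set ℂ) - spectrum ℂ (u • Bc) := by
      rw [spectrum.singleton_sub_eq]
      have : u • Bc = ((s:ℂ))⁻¹ • Bc := rfl
      rw [this]
      simpa [hydef, Algebra.algebraMap_eq_smul_one] using hμ
    rw [hsmul] at h1
    obtain ⟨a, ha, b, hb, hab⟩ := h1
    obtain ⟨ν, hν, rfl⟩ := hb
    rw [Set.mem_singleton_iff] at ha
    subst ha
    have hμeq : μ = 1 - (s:ℂ)⁻¹ * ν := by
      rw [← hab]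
      show (1:ℂ) - (↑u : ℂ) • ν = 1 - (s:ℂ)⁻¹ * ν
      rfl
    have hre : 0 < ν.re := hrepos ν hν
    have hsq := hsμ ν hν
    have hnsq : ‖ν‖^2 = ν.re^2 + ν.im^2 := by
      rw [Complex.sq_norm, Complex.normSq_apply]; ring
    have hμre : μ.re = 1 - ν.re / s := by
      rw [hμeq]; simp [Complex.sub_re, Complex.mul_re, Complex.inv_re, Complex.inv_im,
        Complex.normSq_ofReal, div_eq_mul_inv]
      field_simp
    have hμim : μ.im = -(ν.im / s) := by
      rw [hμeq]; simp [Complex.sub_im, Complex.mul_im, Complex.inv_re, Complex.inv_im,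
        Complex.normSq_ofReal, div_eq_mul_inv]
      field_simp
    have hμsq : ‖μ‖^2 = μ.re^2 + μ.im^2 := by
      rw [Complex.sq_norm, Complex.normSq_apply]; ring
    have hlt : ‖μ‖^2 < 1 := by
      have hs2 : (0:ℝ) < s^2 := by positivity
      rw [hμsq, hμre, hμim]
      have key : (1 - ν.re / s)^2 + (-(ν.im / s))^2
          = 1 - (2 * s * ν.re - (ν.re^2 + ν.im^2)) / s^2 := by
        field_simp
        ring
      rw [key]
      have hpos2 : 0 < (2 * s * ν.re - (ν.re^2 + ν.im^2)) / s^2 := by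
        apply div_pos _ hs2
        nlinarith [hsq, hnsq]
      linarith
    have : ‖μ‖ < 1 := by nlinarith [norm_nonneg μ]
    exact_mod_cast this
  -- spectral radius of y is < 1
  have hrad : spectralRadius ℂ y < 1 := by
    have := spectrum.spectralRadius_lt_of_forall_lt (a := y) (r := 1) hyspec
    simpa using this
  -- Gelfand's formula gives ‖y ^ n‖ → 0
  have hG := spectrum.pow_nnnorm_pow_one_div_tendsto_nhds_spectralRadius y
  obtain ⟨c, hc1, hc2⟩ := exists_between hrad
  have hctop : c ≠ ⊤ := (hc2.trans_le le_top).ne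
  lift c to ℝ≥0 using hctop
  have hev : ∀ᶠ n : ℕ in atTop, (‖y ^ n‖₊ : ℝ≥0∞) ^ (1 / (n:ℝ)) < c :=
    hG.eventually_lt_const hc1
  have hbound : ∀ᶠ n : ℕ in atTop, ‖y ^ n‖ ≤ ((c:ℝ≥0) : ℝ) ^ n := by
    filter_upwards [hev, eventually_ge_atTop 1] with n hn hn1
    have hn0 : ((n:ℝ)) ≠ 0 := by
      have : (1:ℕ) ≤ n := hn1
      positivity
    have h1 : (‖y ^ n‖₊ : ℝ≥0∞) < (c : ℝ≥0∞) ^ (n:ℝ) := by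
      calc (‖y ^ n‖₊ : ℝ≥0∞) = ((‖y ^ n‖₊ : ℝ≥0∞) ^ (1 / (n:ℝ))) ^ ((n:ℝ)) := by
            rw [← ENNReal.rpow_mul, one_div_mul_cancel hn0, ENNReal.rpow_one]
        _ < (c : ℝ≥0∞) ^ ((n:ℝ)) :=
            ENNReal.rpow_lt_rpow hn (by positivity)
    rw [ENNReal.rpow_natCast, ← ENNReal.coe_pow] at h1
    have h2 : ‖y ^ n‖₊ ≤ c ^ n := (ENNReal.coe_lt_coe.mp h1).le
    calc ‖y ^ n‖ = ((‖y ^ n‖₊ : ℝ≥0) : ℝ) := rfl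
      _ ≤ ((c ^ n : ℝ≥0) : ℝ) := by exact_mod_cast h2
      _ = ((c:ℝ≥0):ℝ) ^ n := by push_cast; ring
  have hc1R : ((c:ℝ≥0):ℝ) < 1 := by exact_mod_cast hc2
  have hnormlim : Tendsto (fun n : ℕ => ‖y ^ n‖) atTop (𝓝 0) :=
    squeeze_zero' (Eventually.of_forall fun n => norm_nonneg _) hbound
      (tendsto_pow_atTop_nhds_zero_of_lt_one c.coe_nonneg hc1R)
  -- entrywise convergence of Q ^ n to 0
  have hmapn : ∀ n : ℕ, (Q ^ n).map Complex.ofReal = y ^ n := by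
    intro n
    rw [hyQ, ← map_pow]
    rfl
  have hQpow0 : ∀ k q : Fin N, Tendsto (fun n : ℕ => (Q ^ n) k q) atTop (𝓝 0) := by
    intro k q
    apply squeeze_zero_norm' _ hnormlim
    filter_upwards with n
    calc ‖(Q ^ n) k q‖ = ‖(((Q ^ n) k q : ℝ) : ℂ)‖ := (Complex.norm_real _).symm
      _ = ‖((Q ^ n).map Complex.ofReal) k q‖ := rfl
      _ ≤ ‖(Q ^ n).map Complex.ofReal‖ := entry_le_norm _ k q
      _ = ‖y ^ n‖ := by rw [hmapn n]
  -- entries of powers of Q are nonnegative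
  have hQpownn : ∀ (n : ℕ) (p q : Fin N), 0 ≤ (Q ^ n) p q := by
    intro n
    induction n with
    | zero => intro p q; simp [Matrix.one_apply]; positivity
    | succ k ih =>
      intro p q
      rw [pow_succ, Matrix.mul_apply]
      exact Finset.sum_nonneg fun l _ => mul_nonneg (ih p l) (hQnn l q)
  -- determinant of B is a unit
  have hdet : IsUnit B.det := hur_isUnit_det B hH
  -- geometric series identity
  have hBsq : B = s • ((1:Matrix (Fin N) (Fin N) ℝ) - Q) := by
    rw [hQdef]
    simp [smul_smul, mul_inv_cancel₀ hs0.ne']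
  have hgeom : ∀ n : ℕ, s⁻¹ • (∑ k ∈ Finset.range n, Q ^ k) = B⁻¹ * (1 - Q ^ n) := by
    intro n
    have h1 : B * (s⁻¹ • (∑ k ∈ Finset.range n, Q ^ k)) = 1 - Q ^ n := by
      rw [hBsq, Matrix.smul_mul, Matrix.mul_smul, smul_smul, mul_inv_cancel₀ hs0.ne',
        one_smul]
      exact mul_neg_geom_sum Q n
    rw [← h1, Matrix.nonsing_inv_mul_cancel_left _ _ hdet]
  -- conclude
  intro p q
  have hlim : Tendsto (fun n : ℕ => (B⁻¹ * (1 - Q ^ n)) p q) atTop (𝓝 (B⁻¹ p q)) := by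
    have h1 : ∀ n : ℕ, (B⁻¹ * (1 - Q ^ n)) p q
        = ∑ k, B⁻¹ p k * ((1:Matrix (Fin N) (Fin N) ℝ) k q - (Q ^ n) k q) := by
      intro n
      rw [Matrix.mul_apply]
      simp [Matrix.sub_apply]
    simp only [h1]
    have h2 : Tendsto (fun n : ℕ => ∑ k, B⁻¹ p k * ((1:Matrix (Fin N) (Fin N) ℝ) k q - (Q ^ n) k q))
        atTop (𝓝 (∑ k, B⁻¹ p k * ((1:Matrix (Fin N) (Fin N) ℝ) k q - 0))) := by
      apply tendsto_finset_sum
      intro k _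
      exact (tendsto_const_nhds.sub (hQpow0 k q)).const_mul _
    convert h2 using 2
    symm
    calc ∑ k : Fin N, B⁻¹ p k * ((1:Matrix (Fin N) (Fin N) ℝ) k q - 0)
        = ∑ k : Fin N, (if k = q then B⁻¹ p k else 0) := by
          apply Finset.sum_congr rfl; intro k _
          rw [sub_zero, Matrix.one_apply]
          split <;> simp only [mul_one, mul_zero]
      _ = B⁻¹ p q := by
          rw [Finset.sum_ite_eq' Finset.univ q (fun k => B⁻¹ p k)]
          simp
  have hnn : ∀ n : ℕ, 0 ≤ (B⁻¹ * (1 - Q ^ n)) p q := by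
    intro n
    rw [← hgeom n, Matrix.smul_apply, smul_eq_mul]
    apply mul_nonneg (by positivity)
    rw [Matrix.sum_apply]
    exact Finset.sum_nonneg fun k _ => hQpownn k p q
  exact ge_of_tendsto' hlim hnn

end Aux2


/-- (Adding an edge can never improve robustness.) Suppose `-(A-M)` is
Hurwitz, `i ≠ j`, `Mᵢⱼ = 0`, `m > 0`, and `-(A - M - m eᵢ eⱼᵀ)` is Hurwitz. Then
`(A - M - m eᵢ eⱼᵀ)⁻¹ 𝟙 ≥ (A-M)⁻¹ 𝟙` entrywise. -/
theorem stmt_14 {N : ℕ} (A M : Matrix (Fin N) (Fin N) ℝ)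
    (hAdiag : ∀ p q, p ≠ q → A p q = 0) (hApos : ∀ p, 0 < A p p)
    (hMnonneg : ∀ p q, 0 ≤ M p q) (hMdiag : ∀ p, M p p = 0)
    (hHur : IsHurwitz (-(A - M)))
    (i j : Fin N) (hij : i ≠ j) (hMij : M i j = 0) (m : ℝ) (hm : 0 < m)
    (hHur2 : IsHurwitz (-(A - M - Matrix.single i j m))) :
    ∀ p, ((A - M)⁻¹ *ᵥ (fun _ : Fin N => (1 : ℝ))) p ≤
      ((A - M - Matrix.single i j m)⁻¹ *ᵥ (fun _ : Fin N => (1 : ℝ))) p := by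
  intro p
  set E : Matrix (Fin N) (Fin N) ℝ := Matrix.single i j m with hE
  set B : Matrix (Fin N) (Fin N) ℝ := A - M with hB
  set B' : Matrix (Fin N) (Fin N) ℝ := A - M - E with hB'
  have hEnn : ∀ a b, 0 ≤ E a b := by
    intro a b
    simp only [hE, Matrix.single, Matrix.of_apply]
    split <;> simp [hm.le]
  have hoffB : ∀ a b, a ≠ b → B a b ≤ 0 := by
    intro a b hab
    simp only [hB, Matrix.sub_apply, hAdiag a b hab, zero_sub, neg_nonpos]
    exact hMnonneg a b
  have hoffB' : ∀ a b, a ≠ b → B' a b ≤ 0 := by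
    intro a b hab
    have h1 : B' a b = B a b - E a b := by simp [hB', hB, Matrix.sub_apply]
    rw [h1]
    have := hoffB a b hab
    have := hEnn a b
    linarith
  have hBinv := zmatrix_inv_nonneg B hoffB hHur
  have hB'inv := zmatrix_inv_nonneg B' hoffB' hHur2
  have hdB := hur_isUnit_det B hHur
  have hdB' := hur_isUnit_det B' hHur2
  have hkey : B'⁻¹ - B⁻¹ = B'⁻¹ * E * B⁻¹ := by
    have hBB' : B - B' = E := by rw [hB, hB']; abel
    rw [← hBB', Matrix.mul_sub, Matrix.nonsing_inv_mul _ hdB', Matrix.sub_mul,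
      Matrix.mul_nonsing_inv_cancel_right _ _ hdB, Matrix.one_mul]
  have hdiffnn : ∀ a b, 0 ≤ (B'⁻¹ - B⁻¹) a b := by
    intro a b
    rw [hkey, Matrix.mul_apply]
    apply Finset.sum_nonneg; intro k _
    apply mul_nonneg _ (hBinv k b)
    rw [Matrix.mul_apply]
    apply Finset.sum_nonneg; intro l _
    exact mul_nonneg (hB'inv a l) (hEnn l k)
  have hsub : (B'⁻¹ *ᵥ (fun _ : Fin N => (1:ℝ))) p - (B⁻¹ *ᵥ (fun _ : Fin N => (1:ℝ))) p
      = ((B'⁻¹ - B⁻¹) *ᵥ (fun _ : Fin N => (1:ℝ))) p := by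
    rw [Matrix.sub_mulVec]
    simp [Pi.sub_apply]
  have hfin : 0 ≤ ((B'⁻¹ - B⁻¹) *ᵥ (fun _ : Fin N => (1:ℝ))) p := by
    rw [Matrix.mulVec, dotProduct]
    exact Finset.sum_nonneg fun k _ => by simpa using hdiffnn p k
  linarith [hsub, hfin]
end

section
/- Suppose −(A−M) is Hurwitz, let u = (A−M)^{−1}𝟙, let i ≠ k with M_{ik} = 0 and m > 0, and suppose −(A − M − m e_i e_kᵀ) is also Hurwitz. Then ū = (A − M − m e_i e_kᵀ)^{−1}𝟙 satisfies ū_i ≥ u_i + (m/a_i)·u_k. -/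
open Matrix

open Filter Finset

attribute [local instance] Matrix.linftyOpNormedAddCommGroup Matrix.linftyOpNormedRing Matrix.linftyOpNormedAlgebra

/-- entry bound by linfty op norm -/
lemma entry_norm_le_s17 {n : Type*} [Fintype n] (X : Matrix n n ℂ) (p q : n) : ‖X p q‖ ≤ ‖X‖ := by
  have h1 : ‖X p q‖₊ ≤ ∑ j, ‖X p j‖₊ :=
    Finset.single_le_sum (f := fun j => ‖X p j‖₊) (fun _ _ => zero_le) (Finset.mem_univ q)
  have h2 : (∑ j, ‖X p j‖₊) ≤ (Finset.univ : Finset n).sup fun r => ∑ j, ‖X r j‖₊ :=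
    Finset.le_sup (f := fun r => ∑ j, ‖X r j‖₊) (Finset.mem_univ p)
  have := (h1.trans h2)
  rw [← Matrix.linfty_opNNNorm_def] at this
  exact this

lemma mul_entries_nonneg {N : ℕ} {X Y : Matrix (Fin N) (Fin N) ℝ}
    (hX : ∀ p q, 0 ≤ X p q) (hY : ∀ p q, 0 ≤ Y p q) : ∀ p q, 0 ≤ (X * Y) p q := by
  intro p q
  rw [Matrix.mul_apply]
  exact Finset.sum_nonneg fun j _ => mul_nonneg (hX p j) (hY j q)

lemma pow_entries_nonneg {N : ℕ} {X : Matrix (Fin N) (Fin N) ℝ}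
    (hX : ∀ p q, 0 ≤ X p q) : ∀ t p q, 0 ≤ (X ^ t) p q := by
  intro t
  induction t with
  | zero => intro p q; simp [Matrix.one_apply]; split_ifs <;> norm_num
  | succ t ih =>
    rw [pow_succ]
    exact mul_entries_nonneg ih hX

lemma pow_entries_bound {N : ℕ} {X : Matrix (Fin N) (Fin N) ℝ} {e : ℝ}
    (hX : ∀ p q, 0 ≤ X p q) (he : ∀ p q, X p q ≤ e) (he0 : 0 ≤ e) :
    ∀ t p q, (X ^ (t + 1)) p q ≤ e * ((N : ℝ) * e) ^ t := by
  intro t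
  induction t with
  | zero => simpa using he
  | succ t ih =>
    intro p q
    rw [pow_succ, Matrix.mul_apply]
    calc ∑ j, (X ^ (t+1)) p j * X j q
        ≤ ∑ j : Fin N, (e * ((N:ℝ) * e) ^ t) * e := by
          refine Finset.sum_le_sum fun j _ => ?_
          exact mul_le_mul (ih p j) (he j q) (hX j q) (by positivity)
      _ = e * ((N:ℝ) * e) ^ (t + 1) := by
          rw [Finset.sum_const, Finset.card_univ, Fintype.card_fin]
          ring

lemma mmatrix_key {N : ℕ} (B : Matrix (Fin N) (Fin N) ℝ)
    (hoff : ∀ p q, p ≠ q → B p q ≤ 0)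
    (hspec : ∀ μ ∈ spectrum ℂ (B.map Complex.ofReal), 0 < μ.re) :
    IsUnit B.det ∧ ∀ p q, 0 ≤ B⁻¹ p q := by
  rcases isEmpty_or_nonempty (Fin N) with hN | hN
  · exact ⟨by simp [Matrix.det_isEmpty], fun p q => isEmptyElim p⟩
  classical
  set φ : Matrix (Fin N) (Fin N) ℝ →+* Matrix (Fin N) (Fin N) ℂ := Complex.ofRealHom.mapMatrix
    with hφdef
  have hφ : ∀ X : Matrix (Fin N) (Fin N) ℝ, φ X = X.map Complex.ofReal := fun _ => rfl
  set Bc := B.map Complex.ofReal with hBc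
  haveI : Nontrivial (Matrix (Fin N) (Fin N) ℂ) := by
    refine ⟨0, 1, fun h => ?_⟩
    have := congr_fun (congr_fun h (Classical.arbitrary _)) (Classical.arbitrary _)
    simp [Matrix.one_apply] at this
  -- invertibility
  have h0 : (0 : ℂ) ∉ spectrum ℂ Bc := fun h => by simpa using hspec 0 h
  have hBcunit : IsUnit Bc := by
    by_contra h
    exact h0 ((spectrum.zero_mem_iff (R := ℂ)).mpr h)
  have hdetc : IsUnit Bc.det := (Matrix.isUnit_iff_isUnit_det Bc).mp hBcunit
  have hdetB : B.det ≠ 0 := by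
    intro h
    have h2 : (Complex.ofRealHom B.det) = Bc.det := RingHom.map_det Complex.ofRealHom B
    rw [h] at h2
    simp at h2
    rw [← h2] at hdetc
    simp at hdetc
  have hdet : IsUnit B.det := hdetB.isUnit
  have hBB : B * B⁻¹ = 1 := Matrix.mul_nonsing_inv B hdet
  have hBB' : B⁻¹ * B = 1 := Matrix.nonsing_inv_mul B hdet
  -- spectrum bounds
  have hcpt : IsCompact (spectrum ℂ Bc) := spectrum.isCompact Bc
  have hne : (spectrum ℂ Bc).Nonempty := spectrum.nonempty Bc
  obtain ⟨lam0, hlam0, hmin⟩ := hcpt.exists_isMinOn hne Complex.continuous_re.continuousOn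
  have hδ : 0 < lam0.re := hspec lam0 hlam0
  set δ : ℝ := lam0.re with hδdef
  have hminle : ∀ μ ∈ spectrum ℂ Bc, δ ≤ μ.re := fun μ hμ => hmin hμ
  set R : ℝ := ‖Bc‖ * ‖(1 : Matrix (Fin N) (Fin N) ℂ)‖ with hR
  have hRnonneg : 0 ≤ R := mul_nonneg (norm_nonneg _) (norm_nonneg _)
  have hRbound : ∀ μ ∈ spectrum ℂ Bc, ‖μ‖ ≤ R := fun μ hμ => by
    have := spectrum.subset_closedBall_norm_mul Bc hμ
    simpa [mem_closedBall_zero_iff, hR] using this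
  -- choose s
  set d : ℝ := Finset.univ.sup' Finset.univ_nonempty (fun p => B p p) with hd
  set s : ℝ := max (1 + R ^ 2 / (2 * δ)) (1 + d) with hs
  have hs0 : 0 < s := lt_of_lt_of_le (by positivity) (le_max_left _ _)
  have hsd : ∀ p, B p p ≤ s := fun p => by
    have h1 : B p p ≤ d := Finset.le_sup' (f := fun r => B r r) (Finset.mem_univ p)
    have h2 : (1 : ℝ) + d ≤ s := le_max_right _ _
    linarith
  have hsR : R ^ 2 < 2 * s * δ := by
    have h1 : 1 + R ^ 2 / (2 * δ) ≤ s := le_max_left _ _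
    have h2 : R ^ 2 / (2 * δ) * (2 * δ) = R ^ 2 := div_mul_cancel₀ _ (by positivity)
    nlinarith
  set Q := s⁻¹ • (s • (1 : Matrix (Fin N) (Fin N) ℝ) - B) with hQdef
  have hQnn : ∀ p q, 0 ≤ Q p q := by
    intro p q
    rcases eq_or_ne p q with h | h
    · subst h
      have he : Q p p = s⁻¹ * (s - B p p) := by
        simp [hQdef, Matrix.smul_apply, Matrix.sub_apply, Matrix.one_apply]
      rw [he]
      exact mul_nonneg (inv_nonneg.2 hs0.le) (by linarith [hsd p])
    · have he : Q p q = s⁻¹ * (0 - B p q) := by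
        simp [hQdef, Matrix.smul_apply, Matrix.sub_apply, Matrix.one_apply, h]
      rw [he]
      exact mul_nonneg (inv_nonneg.2 hs0.le) (by linarith [hoff p q h])
  have h1Q : (1 : Matrix (Fin N) (Fin N) ℝ) - Q = s⁻¹ • B := by
    rw [hQdef, smul_sub, smul_smul, inv_mul_cancel₀ hs0.ne', one_smul, sub_sub_cancel]
  set Qc := Q.map Complex.ofReal with hQc
  have hQcpow : ∀ t : ℕ, (Q ^ t).map Complex.ofReal = Qc ^ t := by
    intro t
    rw [hQc, ← hφ, ← hφ]
    exact map_pow φ Q t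
  have hQcs : Qc = ((s : ℂ))⁻¹ • (((s : ℝ) : ℂ) • (1 : Matrix (Fin N) (Fin N) ℂ) - Bc) := by
    ext p q
    simp only [hQc, hQdef, hBc, Matrix.map_apply, Matrix.smul_apply, Matrix.sub_apply,
      Matrix.one_apply, smul_eq_mul]
    split_ifs <;> push_cast <;> ring
  have hspecQ : ∀ μ ∈ spectrum ℂ Qc, ‖μ‖₊ < 1 := by
    intro μ hμ
    have hcne : ((s : ℂ))⁻¹ ≠ 0 := by
      simp only [ne_eq, inv_eq_zero, Complex.ofReal_eq_zero]
      exact hs0.ne'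
    rw [hQcs] at hμ
    rw [show ((s : ℂ))⁻¹ • (((s : ℝ) : ℂ) • (1 : Matrix (Fin N) (Fin N) ℂ) - Bc)
        = (Units.mk0 _ hcne) • (((s : ℝ) : ℂ) • (1 : Matrix (Fin N) (Fin N) ℂ) - Bc) from rfl,
      spectrum.unit_smul_eq_smul] at hμ
    obtain ⟨y, hy, rfl⟩ := hμ
    rw [show ((s : ℝ) : ℂ) • (1 : Matrix (Fin N) (Fin N) ℂ)
        = algebraMap ℂ (Matrix (Fin N) (Fin N) ℂ) ((s : ℝ) : ℂ) from
        (Algebra.algebraMap_eq_smul_one _).symm, ← spectrum.singleton_sub_eq] at hy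
    obtain ⟨a, ha, b, hb, rfl⟩ := Set.mem_sub.mp hy
    rw [Set.mem_singleton_iff] at ha
    subst ha
    have hbre : δ ≤ b.re := hminle b hb
    have hbnorm : ‖b‖ ≤ R := hRbound b hb
    have hkey : ‖((s : ℝ) : ℂ) - b‖ < s := by
      have hsq : ‖((s : ℝ) : ℂ) - b‖ ^ 2 < s ^ 2 := by
        have hb2 : b.re * b.re + b.im * b.im ≤ R ^ 2 := by
          have h := Complex.sq_norm b
          rw [Complex.normSq_apply] at h
          have h2 : ‖b‖ ^ 2 ≤ R ^ 2 := pow_le_pow_left₀ (norm_nonneg _) hbnorm 2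
          rwa [h] at h2
        rw [Complex.sq_norm, Complex.normSq_apply, Complex.sub_re,
          Complex.sub_im, Complex.ofReal_re, Complex.ofReal_im]
        nlinarith [hb2, hsR, mul_le_mul_of_nonneg_left hbre
          (le_of_lt (by positivity : (0:ℝ) < 2 * s))]
      exact lt_of_pow_lt_pow_left₀ 2 hs0.le hsq
    have : ‖(Units.mk0 _ hcne : ℂ) • (((s : ℝ) : ℂ) - b)‖ < 1 := by
      rw [smul_eq_mul, norm_mul, Units.val_mk0]
      have h1 : ‖((s : ℂ))⁻¹‖ = s⁻¹ := by
        rw [norm_inv, Complex.norm_real, Real.norm_of_nonneg hs0.le]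
      rw [h1]
      calc s⁻¹ * ‖((s : ℝ) : ℂ) - b‖ < s⁻¹ * s :=
            mul_lt_mul_of_pos_left hkey (inv_pos.2 hs0)
        _ = 1 := inv_mul_cancel₀ hs0.ne'
    simp only [← NNReal.coe_lt_coe, coe_nnnorm, NNReal.coe_one]
    exact this
    -- spectral radius < 1
  have hρ : spectralRadius ℂ Qc < 1 := by
    have h := spectrum.spectralRadius_lt_of_forall_lt (a := Qc) (r := 1) hspecQ
    simpa using h
  obtain ⟨r, hρr, hr1⟩ := ENNReal.lt_iff_exists_nnreal_btwn.mp hρ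
  have hr1' : (r : ℝ) < 1 := by exact_mod_cast hr1
  have hgel := spectrum.pow_nnnorm_pow_one_div_tendsto_nhds_spectralRadius Qc
  set ε : ℝ := 1 / (2 * ((N : ℝ) + 1)) with hεdef
  have hε : 0 < ε := by positivity
  have hrpow : Tendsto (fun t : ℕ => (r : ℝ) ^ t) atTop (nhds 0) :=
    tendsto_pow_atTop_nhds_zero_of_lt_one r.coe_nonneg hr1'
  have hev : ∀ᶠ t : ℕ in atTop, (‖Qc ^ t‖₊ : ENNReal) ^ (1 / (t : ℝ)) < (r : ENNReal) :=
    hgel.eventually_lt_const hρr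
  have hev2 : ∀ᶠ t : ℕ in atTop, (r : ℝ) ^ t < ε := hrpow.eventually (gt_mem_nhds hε)
  obtain ⟨n, hn1, hnrm, hrn⟩ :
      ∃ t : ℕ, 1 ≤ t ∧ (‖Qc ^ t‖₊ : ENNReal) ^ (1 / (t : ℝ)) < (r : ENNReal) ∧ (r : ℝ) ^ t < ε := by
    obtain ⟨t, h1, h2, h3⟩ := ((eventually_ge_atTop 1).and (hev.and hev2)).exists
    exact ⟨t, h1, h2, h3⟩
  have hQn : ‖Qc ^ n‖ < ε := by
    have hn0 : (n : ℝ) ≠ 0 := Nat.cast_ne_zero.2 (by omega)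
    have h1 : ((‖Qc ^ n‖₊ : ENNReal) ^ (1 / (n : ℝ))) ^ (n : ℝ) = (‖Qc ^ n‖₊ : ENNReal) := by
      rw [← ENNReal.rpow_mul, one_div, inv_mul_cancel₀ hn0, ENNReal.rpow_one]
    have h2 : (‖Qc ^ n‖₊ : ENNReal) < (r : ENNReal) ^ (n : ℝ) := by
      rw [← h1]
      exact ENNReal.rpow_lt_rpow hnrm (by positivity)
    rw [← ENNReal.coe_rpow_of_nonneg r (by positivity : (0:ℝ) ≤ (n:ℝ))] at h2
    have h3 : ‖Qc ^ n‖₊ < r ^ (n : ℝ) := by exact_mod_cast h2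
    have h4 : ‖Qc ^ n‖ < ((r ^ (n : ℝ) : NNReal) : ℝ) := h3
    have h5 : ((r ^ (n : ℝ) : NNReal) : ℝ) = (r : ℝ) ^ n := by
      rw [NNReal.coe_rpow, Real.rpow_natCast]
    rw [h5] at h4
    exact h4.trans hrn
  set P := Q ^ n with hP
  have hPnn : ∀ p q, 0 ≤ P p q := pow_entries_nonneg hQnn n
  have hPe : ∀ p q, P p q ≤ ε := by
    intro p q
    have h1 : ‖(P.map Complex.ofReal) p q‖ ≤ ‖P.map Complex.ofReal‖ := entry_norm_le_s17 _ p q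
    rw [hP, hQcpow n] at h1
    have h2 : ‖(P.map Complex.ofReal) p q‖ = |P p q| := by
      simp [Matrix.map_apply]
    rw [hP] at h2
    calc P p q ≤ |P p q| := le_abs_self _
      _ = ‖((Q ^ n).map Complex.ofReal) p q‖ := h2.symm
      _ ≤ ‖Qc ^ n‖ := by rw [← hQcpow n] at h1 ⊢; exact entry_norm_le_s17 _ p q
      _ ≤ ε := hQn.le
  have hNε : (N : ℝ) * ε ≤ 1 / 2 := by
    rw [hεdef, mul_one_div, div_le_div_iff₀ (by positivity) (by norm_num)]
    have : (0:ℝ) ≤ (N : ℝ) := Nat.cast_nonneg N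
    linarith
  -- W and geometric identity
  set W := s • B⁻¹ with hW
  have h1QW : W * ((1 : Matrix (Fin N) (Fin N) ℝ) - Q) = 1 := by
    rw [h1Q, hW, Matrix.smul_mul, Matrix.mul_smul, smul_smul, mul_inv_cancel₀ hs0.ne', one_smul,
      hBB']
  have hgeo : ∀ m : ℕ, W = (∑ j ∈ Finset.range m, Q ^ j) + W * Q ^ m := by
    intro m
    have h := mul_geom_sum Q m
    have h2 : ((1 : Matrix (Fin N) (Fin N) ℝ) - Q) * (∑ j ∈ Finset.range m, Q ^ j)
        = 1 - Q ^ m := by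
      calc ((1 : Matrix (Fin N) (Fin N) ℝ) - Q) * (∑ j ∈ Finset.range m, Q ^ j)
          = -((Q - 1) * (∑ j ∈ Finset.range m, Q ^ j)) := by rw [← neg_mul, neg_sub]
        _ = -(Q ^ m - 1) := by rw [h]
        _ = 1 - Q ^ m := by rw [neg_sub]
    calc W = W * 1 := (mul_one W).symm
      _ = W * (((1 : Matrix (Fin N) (Fin N) ℝ) - Q) * (∑ j ∈ Finset.range m, Q ^ j) + Q ^ m) := by
          rw [h2, sub_add_cancel]
      _ = W * (((1 : Matrix (Fin N) (Fin N) ℝ) - Q) * (∑ j ∈ Finset.range m, Q ^ j)) + W * Q ^ m := by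
          rw [mul_add]
      _ = (W * ((1 : Matrix (Fin N) (Fin N) ℝ) - Q)) * (∑ j ∈ Finset.range m, Q ^ j) + W * Q ^ m := by
          rw [mul_assoc]
      _ = (∑ j ∈ Finset.range m, Q ^ j) + W * Q ^ m := by rw [h1QW, one_mul]
  -- nonnegativity of W
  have hWnn : ∀ p q, 0 ≤ W p q := by
    intro p q
    by_contra hneg
    push_neg at hneg
    set C : ℝ := ∑ j, |W p j| with hC
    have hC0 : 0 ≤ C := Finset.sum_nonneg fun _ _ => abs_nonneg _
    have hb : ∀ t : ℕ, -(W p q) ≤ C * (ε * (1/2 : ℝ) ^ t) := by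
      intro t
      have hPt : ∀ a b, 0 ≤ (Q ^ (n * (t+1))) a b ∧ (Q ^ (n * (t+1))) a b ≤ ε * (1/2 : ℝ) ^ t := by
        intro a b
        rw [pow_mul]
        constructor
        · exact pow_entries_nonneg hPnn (t+1) a b
        · calc (P ^ (t+1)) a b ≤ ε * ((N : ℝ) * ε) ^ t := pow_entries_bound hPnn hPe hε.le t a b
            _ ≤ ε * (1/2 : ℝ) ^ t := by
                apply mul_le_mul_of_nonneg_left _ hε.le
                exact pow_le_pow_left₀ (by positivity) hNε t
      have hent : W p q = (∑ j ∈ Finset.range (n * (t+1)), Q ^ j) p q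
          + (W * Q ^ (n * (t+1))) p q := by
        have := congrFun (congrFun (hgeo (n * (t+1))) p) q
        simpa [Matrix.add_apply] using this
      have hSnn : 0 ≤ (∑ j ∈ Finset.range (n * (t+1)), Q ^ j) p q := by
        rw [Matrix.sum_apply]
        exact Finset.sum_nonneg fun j _ => pow_entries_nonneg hQnn j p q
      have hWQ : -(C * (ε * (1/2 : ℝ) ^ t)) ≤ (W * Q ^ (n * (t+1))) p q := by
        rw [Matrix.mul_apply]
        have hterm : ∀ j ∈ Finset.univ,
            -(|W p j| * (ε * (1/2 : ℝ) ^ t)) ≤ W p j * (Q ^ (n * (t+1))) j q := by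
          intro j _
          have h1 := (hPt j q).1
          have h2 := (hPt j q).2
          nlinarith [le_abs_self (W p j), neg_abs_le (W p j), abs_nonneg (W p j)]
        calc -(C * (ε * (1/2 : ℝ) ^ t)) = ∑ j, -(|W p j| * (ε * (1/2 : ℝ) ^ t)) := by
              rw [hC, Finset.sum_mul]
              exact (Finset.sum_neg_distrib _).symm
          _ ≤ ∑ j, W p j * (Q ^ (n * (t+1))) j q := Finset.sum_le_sum hterm
      linarith
    have hT : Tendsto (fun t : ℕ => C * (ε * (1/2 : ℝ) ^ t)) atTop (nhds 0) := by
      have h := tendsto_pow_atTop_nhds_zero_of_lt_one (by norm_num : (0:ℝ) ≤ 1/2)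
        (by norm_num : (1/2 : ℝ) < 1)
      have h2 := (h.const_mul ε).const_mul C
      simpa using h2
    obtain ⟨t, ht⟩ := (hT.eventually (gt_mem_nhds (show (0:ℝ) < -(W p q) by linarith))).exists
    exact absurd (hb t) (by linarith)
  refine ⟨hdet, fun p q => ?_⟩
  have hBi : B⁻¹ = s⁻¹ • W := by
    rw [hW, smul_smul, inv_mul_cancel₀ hs0.ne', one_smul]
  rw [hBi, Matrix.smul_apply, smul_eq_mul]
  exact mul_nonneg (inv_nonneg.2 hs0.le) (hWnn p q)

/-- Suppose `-(A-M)` is Hurwitz, `u = (A-M)⁻¹ 𝟙`, `i ≠ k` with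
`Mᵢₖ = 0`, `m > 0`, and `-(A - M - m eᵢ eₖᵀ)` is Hurwitz. Then
`ū = (A - M - m eᵢ eₖᵀ)⁻¹ 𝟙` satisfies `ūᵢ ≥ uᵢ + (m/aᵢ) uₖ`. -/
theorem stmt_17 {N : ℕ} (A M : Matrix (Fin N) (Fin N) ℝ)
    (hAdiag : ∀ p q, p ≠ q → A p q = 0) (hApos : ∀ p, 0 < A p p)
    (hMnonneg : ∀ p q, 0 ≤ M p q) (hMdiag : ∀ p, M p p = 0)
    (hHur : IsHurwitz (-(A - M)))
    (i k : Fin N) (hik : i ≠ k) (hMik : M i k = 0) (m : ℝ) (hm : 0 < m)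
    (hHur2 : IsHurwitz (-(A - M - Matrix.single i k m))) :
    ((A - M)⁻¹ *ᵥ (fun _ : Fin N => (1 : ℝ))) i +
        m / A i i * ((A - M)⁻¹ *ᵥ (fun _ : Fin N => (1 : ℝ))) k ≤
      ((A - M - Matrix.single i k m)⁻¹ *ᵥ (fun _ : Fin N => (1 : ℝ))) i := by
  classical
  set E := Matrix.single i k m with hE
  set B := A - M with hBdef
  set B2 := A - M - E with hB2def
  have hEapp : ∀ p q, E p q = if i = p ∧ k = q then m else 0 := fun p q => rfl
  have hEnn : ∀ p q, 0 ≤ E p q := by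
    intro p q
    rw [hEapp]
    split_ifs
    · exact hm.le
    · exact le_refl 0
  -- spectra
  have hspecOf : ∀ (X : Matrix (Fin N) (Fin N) ℝ), IsHurwitz (-X) →
      ∀ μ ∈ spectrum ℂ (X.map Complex.ofReal), 0 < μ.re := by
    intro X hX μ hμ
    have hmap : (-X).map Complex.ofReal = -(X.map Complex.ofReal) := by
      ext p q; simp [Matrix.map_apply]
    have hneg : -μ ∈ spectrum ℂ ((-X).map Complex.ofReal) := by
      rw [hmap, ← spectrum.neg_eq]
      exact Set.neg_mem_neg.mpr hμ
    have := hX (-μ) hneg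
    simpa using this
  have hoffB : ∀ p q, p ≠ q → B p q ≤ 0 := by
    intro p q h
    simp only [hBdef, Matrix.sub_apply, hAdiag p q h, zero_sub]
    linarith [hMnonneg p q]
  have hoffB2 : ∀ p q, p ≠ q → B2 p q ≤ 0 := by
    intro p q h
    simp only [hB2def, Matrix.sub_apply, hAdiag p q h, zero_sub]
    linarith [hMnonneg p q, hEnn p q]
  obtain ⟨hdet1, hinv1⟩ := mmatrix_key B hoffB (hspecOf B hHur)
  obtain ⟨hdet2, hinv2⟩ := mmatrix_key B2 hoffB2 (hspecOf B2 hHur2)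
  set u := B⁻¹ *ᵥ (fun _ : Fin N => (1 : ℝ)) with hu
  set v := B2⁻¹ *ᵥ (fun _ : Fin N => (1 : ℝ)) with hv
  have huk : 0 ≤ u k := by
    rw [hu]
    simp only [Matrix.mulVec, dotProduct, mul_one]
    exact Finset.sum_nonneg fun j _ => hinv1 k j
  have hBu : B *ᵥ u = (fun _ : Fin N => (1 : ℝ)) := by
    rw [hu, Matrix.mulVec_mulVec, Matrix.mul_nonsing_inv B hdet1, Matrix.one_mulVec]
  have hBsplit : B = B2 + E := by rw [hB2def, sub_add_cancel]
  have hveq : v = u + B2⁻¹ *ᵥ (E *ᵥ u) := by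
    calc v = B2⁻¹ *ᵥ (B *ᵥ u) := by rw [hBu]
      _ = B2⁻¹ *ᵥ (B2 *ᵥ u + E *ᵥ u) := by rw [hBsplit, Matrix.add_mulVec]
      _ = B2⁻¹ *ᵥ (B2 *ᵥ u) + B2⁻¹ *ᵥ (E *ᵥ u) := by rw [Matrix.mulVec_add]
      _ = (B2⁻¹ * B2) *ᵥ u + B2⁻¹ *ᵥ (E *ᵥ u) := by rw [Matrix.mulVec_mulVec]
      _ = u + B2⁻¹ *ᵥ (E *ᵥ u) := by rw [Matrix.nonsing_inv_mul B2 hdet2, Matrix.one_mulVec]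
  have hEu : ∀ j, (E *ᵥ u) j = if i = j then m * u k else 0 := by
    intro j
    simp only [Matrix.mulVec, dotProduct, hEapp, ite_and]
    by_cases hij : i = j <;> simp [hij, ite_mul, zero_mul, Finset.sum_ite_eq]
  have hterm : (B2⁻¹ *ᵥ (E *ᵥ u)) i = B2⁻¹ i i * (m * u k) := by
    have h1 : (B2⁻¹ *ᵥ (E *ᵥ u)) i = ∑ j, B2⁻¹ i j * (E *ᵥ u) j := rfl
    have h2 : ∀ j, B2⁻¹ i j * (E *ᵥ u) j = if i = j then B2⁻¹ i j * (m * u k) else 0 := by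
      intro j
      rw [hEu j]
      by_cases hij : i = j <;> simp [hij]
    rw [h1, Finset.sum_congr rfl fun j _ => h2 j, Finset.sum_ite_eq]
    simp
  have hB2ii : B2 i i = A i i := by
    have : E i i = 0 := by
      rw [hEapp, if_neg]
      exact fun h => hik h.2.symm
    simp [hB2def, Matrix.sub_apply, hMdiag i, this]
  have hcol : (1 : ℝ) = ∑ j, B2 i j * B2⁻¹ j i := by
    have h := congrFun (congrFun (Matrix.mul_nonsing_inv B2 hdet2) i) i
    rw [Matrix.mul_apply, Matrix.one_apply_eq] at h
    exact h.symm
  have hAB2 : 1 ≤ A i i * B2⁻¹ i i := by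
    have hsum := Finset.add_sum_erase Finset.univ (fun j => B2 i j * B2⁻¹ j i)
      (Finset.mem_univ i)
    have hneg : ∑ j ∈ Finset.univ.erase i, B2 i j * B2⁻¹ j i ≤ 0 :=
      Finset.sum_nonpos fun j hj =>
        mul_nonpos_of_nonpos_of_nonneg
          (hoffB2 i j (Ne.symm (Finset.mem_erase.mp hj).1)) (hinv2 j i)
    have : (1 : ℝ) = B2 i i * B2⁻¹ i i + ∑ j ∈ Finset.univ.erase i, B2 i j * B2⁻¹ j i := by
      rw [hcol, ← hsum]
    rw [hB2ii] at this
    linarith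
  have hinvii : (A i i)⁻¹ ≤ B2⁻¹ i i := by
    have h4 : (A i i)⁻¹ * 1 ≤ (A i i)⁻¹ * (A i i * B2⁻¹ i i) :=
      mul_le_mul_of_nonneg_left hAB2 (inv_nonneg.2 (hApos i).le)
    rwa [mul_one, ← mul_assoc, inv_mul_cancel₀ (hApos i).ne', one_mul] at h4
  have hgoal : u i + m / A i i * u k ≤ v i := by
    rw [hveq, Pi.add_apply, hterm]
    have hmu : 0 ≤ m * u k := mul_nonneg hm.le huk
    have : m / A i i * u k ≤ B2⁻¹ i i * (m * u k) := by
      calc m / A i i * u k = (m * u k) * (A i i)⁻¹ := by rw [div_eq_mul_inv]; ring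
        _ ≤ (m * u k) * B2⁻¹ i i := mul_le_mul_of_nonneg_left hinvii hmu
        _ = B2⁻¹ i i * (m * u k) := mul_comm _ _
    linarith
  exact hgoal
end
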